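/- arXiv:1511.07823 — 6 statements merged into one kernel-verified Lean document; each statement's English description precedes it below -/
import Mathlib

section
/- Let X be a complex Banach space, θ ∈ (π/2, π), and A : X → X a bounded linear operator such that for some C ≥ 0, for every λ ∈ Σ_θ the operator λI − A is invertible and ‖λ(λI − A)^{-1}‖ ≤ C. Then there exists a constant K, depending only on C and θ, such that for every τ > 0 the operator I − τA is invertible and for every integer n ≥ 1 one has ‖A (I − τA)^{-n}‖ ≤ K/(nτ). -/
set_option linter.unusedSectionVars false
set_option linter.unusedVariables false

open Complex Metric Set Real

namespace BEproof

variable {X : Type*} [NormedAddCommGroup X] [NormedSpace ℂ X] [CompleteSpace X]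

/-- resolvent-type pencil -/
noncomputable def Mz (A : X →L[ℂ] X) (τ : ℝ) (z : ℂ) : X →L[ℂ] X :=
  (1 - z) • (1 : X →L[ℂ] X) - (τ : ℂ) • A

noncomputable def Rz (A : X →L[ℂ] X) (τ : ℝ) (z : ℂ) : X →L[ℂ] X :=
  Ring.inverse (Mz A τ z)

/-- hypothesis bundle: resolvent bound on the right half plane -/
def Good (A : X →L[ℂ] X) (C τ : ℝ) : Prop :=
  ∀ w : ℂ, 0 < w.re →
    ∃ B : X →L[ℂ] X, (w • (1 : X →L[ℂ] X) - (τ : ℂ) • A) * B = 1 ∧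
      B * (w • (1 : X →L[ℂ] X) - (τ : ℂ) • A) = 1 ∧ ‖w • B‖ ≤ C

variable {A : X →L[ℂ] X} {C τ : ℝ}

lemma good_exists (h : Good A C τ) {z : ℂ} (hz : z.re < 1) :
    ∃ B : X →L[ℂ] X, Mz A τ z * B = 1 ∧ B * Mz A τ z = 1 ∧ ‖(1 - z) • B‖ ≤ C := by
  have : 0 < (1 - z).re := by simp; linarith
  obtain ⟨B, h1, h2, h3⟩ := h (1 - z) this
  exact ⟨B, h1, h2, h3⟩

lemma good_isUnit (h : Good A C τ) {z : ℂ} (hz : z.re < 1) : IsUnit (Mz A τ z) := by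
  obtain ⟨B, h1, h2, _⟩ := good_exists h hz
  exact ⟨⟨Mz A τ z, B, h1, h2⟩, rfl⟩

lemma Rz_eq (h : Good A C τ) {z : ℂ} (hz : z.re < 1) {B : X →L[ℂ] X}
    (h1 : Mz A τ z * B = 1) (h2 : B * Mz A τ z = 1) : Rz A τ z = B := by
  have hu := good_isUnit h hz
  have := Ring.inverse_mul_cancel (Mz A τ z) hu
  calc Rz A τ z = Rz A τ z * (Mz A τ z * B) := by rw [h1, mul_one]
    _ = (Rz A τ z * Mz A τ z) * B := by rw [mul_assoc]
    _ = B := by rw [Rz, this, one_mul]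

lemma Rz_mul_Mz (h : Good A C τ) {z : ℂ} (hz : z.re < 1) : Rz A τ z * Mz A τ z = 1 :=
  Ring.inverse_mul_cancel _ (good_isUnit h hz)

lemma Mz_mul_Rz (h : Good A C τ) {z : ℂ} (hz : z.re < 1) : Mz A τ z * Rz A τ z = 1 :=
  Ring.mul_inverse_cancel _ (good_isUnit h hz)

lemma norm_smul_Rz (h : Good A C τ) {z : ℂ} (hz : z.re < 1) : ‖(1 - z) • Rz A τ z‖ ≤ C := by
  obtain ⟨B, h1, h2, h3⟩ := good_exists h hz
  rw [Rz_eq h hz h1 h2]; exact h3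

lemma norm_Rz_mul (h : Good A C τ) {z : ℂ} (hz : z.re < 1) :
    ‖Rz A τ z‖ * ‖1 - z‖ ≤ C := by
  have h2 := norm_smul_Rz h hz
  rw [norm_smul ((1:ℂ) - z) (Rz A τ z)] at h2
  simpa [mul_comm] using h2

/-- A commutes with the resolvent. -/
lemma A_comm_Rz (h : Good A C τ) {z : ℂ} (hz : z.re < 1) :
    A * Rz A τ z = Rz A τ z * A := by
  have hAM : A * Mz A τ z = Mz A τ z * A := by
    simp [Mz, mul_sub, sub_mul, smul_mul_assoc, mul_smul_comm]
  calc A * Rz A τ z = (Rz A τ z * Mz A τ z) * (A * Rz A τ z) := by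
        rw [Rz_mul_Mz h hz, one_mul]
    _ = Rz A τ z * ((Mz A τ z * A) * Rz A τ z) := by simp only [mul_assoc]
    _ = Rz A τ z * (A * (Mz A τ z * Rz A τ z)) := by rw [← hAM]; simp only [mul_assoc]
    _ = Rz A τ z * A := by rw [Mz_mul_Rz h hz, mul_one]

/-- ‖A * Rz‖ ≤ (C+1)/τ -/
lemma norm_A_mul_Rz (h : Good A C τ) (hτ : 0 < τ) {z : ℂ} (hz : z.re < 1) :
    τ * ‖A * Rz A τ z‖ ≤ C + 1 := by
  have key : (τ : ℂ) • (A * Rz A τ z) = (1 - z) • Rz A τ z - 1 := by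
    have : (τ : ℂ) • A = (1 - z) • (1 : X →L[ℂ] X) - Mz A τ z := by
      simp [Mz]
    calc (τ : ℂ) • (A * Rz A τ z) = ((τ : ℂ) • A) * Rz A τ z := by
          rw [smul_mul_assoc]
      _ = ((1 - z) • (1 : X →L[ℂ] X)) * Rz A τ z - Mz A τ z * Rz A τ z := by
          rw [this, sub_mul]
      _ = (1 - z) • Rz A τ z - 1 := by
          rw [Mz_mul_Rz h hz, smul_mul_assoc, one_mul]
  have h1 : ‖(τ : ℂ) • (A * Rz A τ z)‖ = τ * ‖A * Rz A τ z‖ := by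
    rw [norm_smul ((τ:ℝ):ℂ) (A * Rz A τ z)]; simp [abs_of_pos hτ]
  have h2 : ‖(1 - z) • Rz A τ z - (1 : X →L[ℂ] X)‖ ≤ C + 1 := by
    refine (norm_sub_le _ _).trans ?_
    have := norm_smul_Rz h hz
    have h1le : ‖(1 : X →L[ℂ] X)‖ ≤ 1 := ContinuousLinearMap.norm_id_le
    linarith
  rw [← h1, key]; exact h2


lemma Rz_zero : Rz A τ 0 = Ring.inverse ((1 : X →L[ℂ] X) - (τ : ℂ) • A) := by
  simp [Rz, Mz]

/-- the resolvent identity R(z) = S + z S R(z) -/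
lemma Rz_res_id (h : Good A C τ) {z : ℂ} (hz : z.re < 1) :
    Rz A τ z = Rz A τ 0 + z • (Rz A τ 0 * Rz A τ z) := by
  have h0 : (0 : ℂ).re < 1 := by norm_num
  have hM : Mz A τ 0 = Mz A τ z + z • (1 : X →L[ℂ] X) := by
    simp only [Mz, sub_zero]
    rw [sub_smul]
    abel
  calc Rz A τ z = (Rz A τ 0 * Mz A τ 0) * Rz A τ z := by rw [Rz_mul_Mz h h0, one_mul]
    _ = Rz A τ 0 * ((Mz A τ z + z • (1 : X →L[ℂ] X)) * Rz A τ z) := by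
        rw [← hM, mul_assoc]
    _ = Rz A τ 0 * (1 + z • Rz A τ z) := by
        rw [add_mul, Mz_mul_Rz h hz, smul_mul_assoc, one_mul]
    _ = Rz A τ 0 + z • (Rz A τ 0 * Rz A τ z) := by
        rw [mul_add, mul_one, mul_smul_comm]

/-- derivative of the resolvent -/
lemma hasDerivAt_Rz (h : Good A C τ) {z : ℂ} (hz : z.re < 1) :
    HasDerivAt (Rz A τ) (Rz A τ z * Rz A τ z) z := by
  have hu : IsUnit (Mz A τ z) := good_isUnit h hz
  have hMd : HasDerivAt (Mz A τ) (-1 : X →L[ℂ] X) z := by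
    have h1 : HasDerivAt (fun w : ℂ => 1 - w) (-1 : ℂ) z := by
      simpa using (hasDerivAt_id z).const_sub (1 : ℂ)
    have h2 := h1.smul_const (1 : X →L[ℂ] X)
    have h3 := h2.sub_const ((τ : ℂ) • A)
    have h4 : Mz A τ = fun w : ℂ => (1 - w) • (1 : X →L[ℂ] X) - (τ : ℂ) • A := rfl
    rw [h4]; simpa using h3
  have hinv := hasFDerivAt_ringInverse (𝕜 := ℂ) hu.unit
  rw [hu.unit_spec] at hinv
  have hcomp := hinv.comp_hasDerivAt z hMd
  have hval : (-(ContinuousLinearMap.mulLeftRight ℂ (X →L[ℂ] X) ↑hu.unit⁻¹ ↑hu.unit⁻¹))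
      (-1 : X →L[ℂ] X) = Rz A τ z * Rz A τ z := by
    have hinv_eq : (↑hu.unit⁻¹ : X →L[ℂ] X) = Rz A τ z := (Ring.inverse_unit hu.unit).symm.trans rfl
    simp [ContinuousLinearMap.mulLeftRight_apply, hinv_eq]
  rw [hval] at hcomp
  exact hcomp

lemma re_lt_one_of_mem_closedBall {r : ℝ} (hr2 : r < 2) {z : ℂ}
    (hz : z ∈ closedBall (-1 : ℂ) r) : z.re < 1 := by
  rw [mem_closedBall, Complex.dist_eq] at hz
  have h1 : (z + 1).re ≤ ‖z + 1‖ := Complex.re_le_norm _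
  have h2 : ‖z - -1‖ = ‖z + 1‖ := by ring_nf
  simp only [Complex.add_re, Complex.one_re] at h1
  rw [h2] at hz
  linarith

lemma ne_zero_of_mem_sphere {r : ℝ} (hr1 : 1 < r) {z : ℂ}
    (hz : z ∈ sphere (-1 : ℂ) r) : z ≠ 0 := by
  intro h0
  rw [mem_sphere, Complex.dist_eq, h0] at hz
  simp at hz
  linarith

/-- Cauchy–Goursat: circle integral of `E * Rz` vanishes -/
lemma circleIntegral_ERz_zero (h : Good A C τ) {r : ℝ} (hr0 : 0 ≤ r) (hr2 : r < 2)
    (E : X →L[ℂ] X) :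
    (∮ z in C(-1, r), E * Rz A τ z) = 0 := by
  apply circleIntegral_eq_zero_of_differentiable_on_off_countable hr0 Set.countable_empty
  · intro z hz
    have hz1 : z.re < 1 := re_lt_one_of_mem_closedBall hr2 hz
    exact (((hasDerivAt_Rz h hz1).differentiableAt).const_mul E).continuousAt.continuousWithinAt
  · intro z hz
    have hz1 : z.re < 1 := re_lt_one_of_mem_closedBall hr2 (ball_subset_closedBall hz.1)
    exact ((hasDerivAt_Rz h hz1).differentiableAt).const_mul E

lemma circleIntegral_add' {E : Type*} [NormedAddCommGroup E] [NormedSpace ℂ E]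
    {f g : ℂ → E} {c : ℂ} {R : ℝ} (hf : CircleIntegrable f c R)
    (hg : CircleIntegrable g c R) :
    (∮ z in C(c, R), (f z + g z)) = (∮ z in C(c, R), f z) + ∮ z in C(c, R), g z := by
  simp only [circleIntegral, smul_add, intervalIntegral.integral_add hf.out hg.out]

lemma circleIntegrable_zpow_smul (h : Good A C τ) {r : ℝ} (hr1 : 1 < r) (hr2 : r < 2)
    (m : ℤ) (E : X →L[ℂ] X) :
    CircleIntegrable (fun z => z ^ m • (E * Rz A τ z)) (-1) r := by
  apply ContinuousOn.circleIntegrable (by linarith : (0:ℝ) ≤ r)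
  intro z hz
  have hz0 : z ≠ 0 := ne_zero_of_mem_sphere hr1 hz
  have hz1 : z.re < 1 := re_lt_one_of_mem_closedBall hr2 (sphere_subset_closedBall hz)
  exact ((continuousAt_zpow₀ z m (Or.inl hz0)).smul
    (((hasDerivAt_Rz h hz1).differentiableAt).const_mul E).continuousAt).continuousWithinAt

/-- key identity: ∮ z^{-(n+1)} D R(z) dz = 2πi D S^{n+1} -/
lemma circleIntegral_key (h : Good A C τ) {r : ℝ} (hr1 : 1 < r) (hr2 : r < 2) :
    ∀ (n : ℕ) (D : X →L[ℂ] X),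
      (∮ z in C(-1, r), (z ^ (-(n : ℤ) - 1)) • (D * Rz A τ z)) =
        (2 * (π : ℂ) * I) • (D * (Rz A τ 0) ^ (n + 1)) := by
  intro n
  induction n with
  | zero =>
    intro D
    have heq : EqOn (fun z : ℂ => (z ^ (-((0:ℕ):ℤ) - 1)) • (D * Rz A τ z))
        (fun z : ℂ => (z - 0)⁻¹ • (D * Rz A τ 0) + (D * Rz A τ 0) * Rz A τ z)
        (sphere (-1 : ℂ) r) := by
      intro z hz
      have hz0 : z ≠ 0 := ne_zero_of_mem_sphere hr1 hz
      have hz1 : z.re < 1 := re_lt_one_of_mem_closedBall hr2 (sphere_subset_closedBall hz)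
      have hres := Rz_res_id h hz1
      have hzp : z ^ (-((0:ℕ):ℤ) - 1) = z⁻¹ := by norm_num
      show z ^ (-((0:ℕ):ℤ) - 1) • (D * Rz A τ z) = _
      simp only [sub_zero]
      rw [hzp, show D * Rz A τ z = D * Rz A τ 0 + z • ((D * Rz A τ 0) * Rz A τ z) by
        conv_lhs => rw [hres]
        rw [mul_add, mul_smul_comm, ← mul_assoc]]
      rw [smul_add, inv_smul_smul₀ hz0]
    rw [circleIntegral.integral_congr (by linarith : (0:ℝ) ≤ r) heq]
    have hint1 : CircleIntegrable (fun z : ℂ => (z - 0)⁻¹ • (D * Rz A τ 0)) (-1) r := by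
      apply ContinuousOn.circleIntegrable (by linarith : (0:ℝ) ≤ r)
      intro z hz
      have hz0 : z ≠ 0 := ne_zero_of_mem_sphere hr1 hz
      exact (((continuousAt_id.sub continuousAt_const).inv₀ (by simpa using hz0)).smul
        continuousAt_const).continuousWithinAt
    have hint2 : CircleIntegrable (fun z : ℂ => (D * Rz A τ 0) * Rz A τ z) (-1) r := by
      apply ContinuousOn.circleIntegrable (by linarith : (0:ℝ) ≤ r)
      intro z hz
      have hz1 : z.re < 1 := re_lt_one_of_mem_closedBall hr2 (sphere_subset_closedBall hz)
      exact (((hasDerivAt_Rz h hz1).differentiableAt).const_mul _).continuousAt.continuousWithinAt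
    rw [circleIntegral_add' hint1 hint2]
    have h0ball : (0:ℂ) ∈ ball (-1:ℂ) r := by
      rw [mem_ball, Complex.dist_eq]
      simpa using hr1
    rw [circleIntegral.integral_smul_const, circleIntegral.integral_sub_inv_of_mem_ball h0ball,
      circleIntegral_ERz_zero h (by linarith) hr2]
    simp
  | succ n ih =>
    intro D
    have heq : EqOn (fun z : ℂ => (z ^ (-((n+1:ℕ):ℤ) - 1)) • (D * Rz A τ z))
        (fun z : ℂ => (z - 0) ^ (-(n:ℤ) - 2) • (D * Rz A τ 0)
          + (z ^ (-(n : ℤ) - 1)) • ((D * Rz A τ 0) * Rz A τ z))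
        (sphere (-1 : ℂ) r) := by
      intro z hz
      have hz0 : z ≠ 0 := ne_zero_of_mem_sphere hr1 hz
      have hz1 : z.re < 1 := re_lt_one_of_mem_closedBall hr2 (sphere_subset_closedBall hz)
      have hres := Rz_res_id h hz1
      have hmul : z ^ (-(n:ℤ) - 2) * z = z ^ (-(n:ℤ) - 1) := by
        rw [← zpow_add_one₀ hz0]; ring_nf
      show z ^ (-((n+1:ℕ):ℤ) - 1) • (D * Rz A τ z) = _
      simp only [sub_zero]
      rw [show (-((n+1:ℕ):ℤ) - 1) = (-(n:ℤ) - 2) by push_cast; ring]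
      rw [show D * Rz A τ z = D * Rz A τ 0 + z • ((D * Rz A τ 0) * Rz A τ z) by
        conv_lhs => rw [hres]
        rw [mul_add, mul_smul_comm, ← mul_assoc]]
      rw [smul_add, smul_smul, hmul]
    rw [circleIntegral.integral_congr (by linarith : (0:ℝ) ≤ r) heq]
    have hint1 : CircleIntegrable (fun z : ℂ => (z - 0) ^ (-(n:ℤ) - 2) • (D * Rz A τ 0)) (-1) r := by
      apply ContinuousOn.circleIntegrable (by linarith : (0:ℝ) ≤ r)
      intro z hz
      have hz0 : z ≠ 0 := ne_zero_of_mem_sphere hr1 hz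
      exact (((continuousAt_id.sub continuousAt_const).zpow₀ _
        (Or.inl (by simpa using hz0))).smul continuousAt_const).continuousWithinAt
    have hint2 := circleIntegrable_zpow_smul h hr1 hr2 (-(n:ℤ) - 1) (D * Rz A τ 0)
    rw [circleIntegral_add' hint1 hint2]
    rw [circleIntegral.integral_smul_const,
      circleIntegral.integral_sub_zpow_of_ne (by omega : -(n:ℤ) - 2 ≠ -1),
      ih (D * Rz A τ 0)]
    simp only [zero_smul, zero_add]
    rw [mul_assoc D (Rz A τ 0), ← pow_succ']

/-- integration by parts on a circle -/
lemma byparts {r : ℝ} (hr1 : 1 < r) (m : ℤ) (hm : (m : ℂ) ≠ 0)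
    {G G' : ℂ → X →L[ℂ] X}
    (hG : ∀ z : ℂ, z.re < 1 → HasDerivAt G (G' z) z)
    (hG'c : ContinuousOn G' (sphere (-1 : ℂ) r)) (hr2 : r < 2) :
    (∮ z in C(-1, r), z ^ (m - 1) • G z) =
      (-(m : ℂ)⁻¹) • ∮ z in C(-1, r), z ^ m • G' z := by
  have hr0 : (0:ℝ) ≤ r := by linarith
  have key : (∮ z in C(-1, r), (z ^ m • G' z + ((m : ℂ) * z ^ (m - 1)) • G z)) = 0 := by
    apply circleIntegral.integral_eq_zero_of_hasDerivWithinAt hr0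
    intro z hz
    have hz0 : z ≠ 0 := ne_zero_of_mem_sphere hr1 hz
    have hz1 : z.re < 1 := re_lt_one_of_mem_closedBall hr2 (sphere_subset_closedBall hz)
    exact ((hasDerivAt_zpow m z (Or.inl hz0)).smul (hG z hz1)).hasDerivWithinAt
  have hint1 : CircleIntegrable (fun z : ℂ => z ^ m • G' z) (-1) r := by
    apply ContinuousOn.circleIntegrable hr0
    intro z hz
    have hz0 : z ≠ 0 := ne_zero_of_mem_sphere hr1 hz
    exact ((continuousAt_zpow₀ z m (Or.inl hz0)).continuousWithinAt).smul (hG'c z hz)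
  have hint2 : CircleIntegrable (fun z : ℂ => ((m : ℂ) * z ^ (m - 1)) • G z) (-1) r := by
    apply ContinuousOn.circleIntegrable hr0
    intro z hz
    have hz0 : z ≠ 0 := ne_zero_of_mem_sphere hr1 hz
    have hz1 : z.re < 1 := re_lt_one_of_mem_closedBall hr2 (sphere_subset_closedBall hz)
    exact ((continuousAt_const.mul (continuousAt_zpow₀ z (m-1) (Or.inl hz0))).smul
      (hG z hz1).continuousAt).continuousWithinAt
  rw [circleIntegral_add' hint1 hint2] at key
  have h2 : (∮ z in C(-1, r), ((m : ℂ) * z ^ (m - 1)) • G z) =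
      (m : ℂ) • ∮ z in C(-1, r), z ^ (m - 1) • G z := by
    rw [← circleIntegral.integral_smul]
    congr 1
    funext z
    rw [smul_smul]
  rw [h2] at key
  have : (m : ℂ) • (∮ z in C(-1, r), z ^ (m - 1) • G z) =
      -(∮ z in C(-1, r), z ^ m • G' z) := by
    rw [eq_neg_iff_add_eq_zero, add_comm]
    exact key
  calc (∮ z in C(-1, r), z ^ (m - 1) • G z)
      = (m : ℂ)⁻¹ • ((m : ℂ) • ∮ z in C(-1, r), z ^ (m - 1) • G z) := by
        rw [inv_smul_smul₀ hm]
    _ = (-(m : ℂ)⁻¹) • ∮ z in C(-1, r), z ^ m • G' z := by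
        rw [this, smul_neg, neg_smul]

/-- the combined representation -/
lemma combined (h : Good A C τ) {r : ℝ} (hr1 : 1 < r) (hr2 : r < 2)
    (n : ℕ) (hn : 2 ≤ n) :
    (2 * (π : ℂ) * I) • (A * (Rz A τ 0) ^ (n + 1)) =
      ((n:ℂ)⁻¹ * ((n:ℂ) - 1)⁻¹) •
        ∮ z in C(-1, r), z ^ (-(n:ℤ) + 1) •
          (A * ((Rz A τ z * Rz A τ z) * Rz A τ z + Rz A τ z * (Rz A τ z * Rz A τ z))) := by
  have hcont_R : ContinuousOn (Rz A τ) (sphere (-1 : ℂ) r) := by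
    intro z hz
    have hz1 : z.re < 1 := re_lt_one_of_mem_closedBall hr2 (sphere_subset_closedBall hz)
    exact (hasDerivAt_Rz h hz1).continuousAt.continuousWithinAt
  have hnC : ((-(n:ℤ) : ℤ) : ℂ) ≠ 0 := by
    have : (0:ℝ) < n := by exact_mod_cast Nat.lt_of_lt_of_le Nat.zero_lt_two hn
    simp only [Int.cast_neg, Int.cast_natCast, ne_eq, neg_eq_zero, Nat.cast_eq_zero]
    omega
  have hn1C : (((-(n:ℤ) + 1) : ℤ) : ℂ) ≠ 0 := by
    have : ((-(n:ℤ) + 1 : ℤ) : ℂ) = ((-(n:ℤ) + 1 : ℤ) : ℂ) := rfl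
    intro hcon
    have : (-(n:ℤ) + 1 : ℤ) = 0 := by exact_mod_cast hcon
    omega
  have e1 := byparts hr1 (-(n:ℤ)) hnC (G := fun z => A * Rz A τ z)
      (G' := fun z => A * (Rz A τ z * Rz A τ z))
      (fun z hz => (hasDerivAt_Rz h hz).const_mul A)
      (fun z hz => continuousAt_const.continuousWithinAt.mul ((hcont_R z hz).mul (hcont_R z hz)))
      hr2
  have e2 := byparts hr1 (-(n:ℤ) + 1) hn1C (G := fun z => A * (Rz A τ z * Rz A τ z))
      (G' := fun z => A * ((Rz A τ z * Rz A τ z) * Rz A τ z + Rz A τ z * (Rz A τ z * Rz A τ z)))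
      (fun z hz => ((hasDerivAt_Rz h hz).mul (hasDerivAt_Rz h hz)).const_mul A)
      (fun z hz => continuousAt_const.continuousWithinAt.mul
        ((((hcont_R z hz).mul (hcont_R z hz)).mul (hcont_R z hz)).add
          ((hcont_R z hz).mul ((hcont_R z hz).mul (hcont_R z hz)))))
      hr2
  simp only [show (-(n:ℤ) + 1 - 1) = -(n:ℤ) by ring] at e2
  have ekey := circleIntegral_key h hr1 hr2 n A
  rw [e1, e2, smul_smul] at ekey
  rw [← ekey]
  congr 1
  push_cast
  rw [show (-(n:ℂ)+1) = -((n:ℂ)-1) by ring, inv_neg, inv_neg]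
  ring

/-- arctan integral bound -/
lemma integral_inv_sq_add_le {ε : ℝ} (hε : 0 < ε) :
    ∫ t in (0:ℝ)..(2*π), (ε^2 + t^2)⁻¹ ≤ ε⁻¹ * (π/2) := by
  have hF : ∀ t : ℝ, HasDerivAt (fun u : ℝ => ε⁻¹ * Real.arctan (u / ε)) ((ε^2 + t^2)⁻¹) t := by
    intro t
    have h1 : HasDerivAt (fun u : ℝ => u / ε) (1/ε) t := by
      simpa using (hasDerivAt_id t).div_const ε
    have h2 := (Real.hasDerivAt_arctan (t/ε)).comp t h1
    have h3 := h2.const_mul ε⁻¹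
    refine h3.congr_deriv ?_
    field_simp
  have hpos : ∀ t : ℝ, (0:ℝ) < ε^2 + t^2 := fun t => by positivity
  have hint : IntervalIntegrable (fun t : ℝ => (ε^2 + t^2)⁻¹) MeasureTheory.volume 0 (2*π) := by
    apply Continuous.intervalIntegrable
    exact (continuous_const.add (continuous_id.pow 2)).inv₀ (fun t => (hpos t).ne')
  rw [intervalIntegral.integral_eq_sub_of_hasDerivAt (fun t _ => hF t) hint]
  simp only [zero_div, Real.arctan_zero, mul_zero, sub_zero]
  have harc : Real.arctan (2*π/ε) ≤ π/2 := (Real.arctan_lt_pi_div_two _).le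
  exact mul_le_mul_of_nonneg_left harc (by positivity)

/-- exact formula for |1 - γ(t)|² -/
lemma abs_one_sub_circleMap {r : ℝ} (t : ℝ) :
    ‖1 - circleMap (-1) r t‖^2 = (2 - r)^2 + 8*r*(Real.sin (t/2))^2 := by
  have hz : (1 : ℂ) - circleMap (-1) r t = ((2:ℝ) : ℂ) - (r:ℝ) * Complex.exp (t * I) := by
    simp [circleMap]
    push_cast
    ring
  rw [hz, Complex.sq_norm, Complex.normSq_apply]
  have hre : (((2:ℝ):ℂ) - (r:ℝ) * Complex.exp (t * I)).re = 2 - r * Real.cos t := by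
    simp [Complex.exp_ofReal_mul_I_re, Complex.exp_ofReal_mul_I_im]
  have him : (((2:ℝ):ℂ) - (r:ℝ) * Complex.exp (t * I)).im = -(r * Real.sin t) := by
    simp [Complex.exp_ofReal_mul_I_re, Complex.exp_ofReal_mul_I_im]
  rw [hre, him]
  have hcos : Real.cos t = 1 - 2*(Real.sin (t/2))^2 := by
    have h1 : Real.cos (2 * (t/2)) = Real.cos (t/2)^2 - Real.sin (t/2)^2 := Real.cos_two_mul' (t/2)
    have h2 : Real.sin (t/2)^2 + Real.cos (t/2)^2 = 1 := Real.sin_sq_add_cos_sq _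
    have h3 : Real.cos t = Real.cos (2 * (t/2)) := by congr 1; ring
    linarith
  have hs := Real.sin_sq_add_cos_sq t
  linear_combination r^2 * hs - 4*r*hcos

/-- the quadratic comparison on the circle -/
lemma inv_abs_sq_le {r : ℝ} (hr : 3/2 ≤ r) (hr2 : r < 2) {t : ℝ}
    (ht0 : 0 ≤ t) (ht2 : t ≤ 2*π) :
    (‖1 - circleMap (-1) r t‖^2)⁻¹ ≤
      ((2-r)^2 + t^2)⁻¹ + ((2-r)^2 + (2*π - t)^2)⁻¹ := by
  set ε := 2 - r with hε
  have hε0 : 0 < ε := by simp [hε]; linarith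
  have hkey := abs_one_sub_circleMap (r := r) t
  have hπ : π ≤ 3.15 := by
    have := Real.pi_lt_d2
    linarith
  have hπ0 := Real.pi_pos
  have h8r : π^2 ≤ 8 * r := by nlinarith
  rcases le_or_gt t π with htπ | htπ
  · -- use first term
    have hsin : t/π ≤ Real.sin (t/2) := by
      have := Real.mul_le_sin (x := t/2) (by linarith) (by linarith)
      calc t/π = 2/π * (t/2) := by field_simp
        _ ≤ Real.sin (t/2) := this
    have hsq : t^2 ≤ 8*r*(Real.sin (t/2))^2 := by
      have h1 : (t/π)^2 ≤ (Real.sin (t/2))^2 := by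
        apply sq_le_sq'
        · nlinarith [Real.sin_nonneg_of_nonneg_of_le_pi (x := t/2) (by linarith) (by linarith),
            div_nonneg ht0 hπ0.le]
        · exact hsin
      have h2 : t^2 / π^2 ≤ (Real.sin (t/2))^2 := by
        calc t^2/π^2 = (t/π)^2 := by field_simp
          _ ≤ _ := h1
      have h3 : π^2 * (t^2/π^2) ≤ π^2 * (Real.sin (t/2))^2 :=
        mul_le_mul_of_nonneg_left h2 (by positivity)
      have h4 : π^2 * (t^2/π^2) = t^2 := by field_simp
      have h5 : π^2 * (Real.sin (t/2))^2 ≤ 8*r*(Real.sin (t/2))^2 :=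
        mul_le_mul_of_nonneg_right h8r (sq_nonneg _)
      linarith
    have hb : ε^2 + t^2 ≤ ‖1 - circleMap (-1) r t‖^2 := by
      rw [hkey]; nlinarith
    have hp1 : (0:ℝ) < ε^2 + t^2 := by positivity
    calc (‖1 - circleMap (-1) r t‖^2)⁻¹ ≤ (ε^2 + t^2)⁻¹ :=
          inv_anti₀ hp1 hb
      _ ≤ _ := le_add_of_nonneg_right (by positivity)
  · -- use second term
    set u := 2*π - t with hu
    have hu0 : 0 ≤ u := by simp [hu]; linarith
    have huπ : u ≤ π := by simp [hu]; linarith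
    have hsin : u/π ≤ Real.sin (t/2) := by
      have h1 := Real.mul_le_sin (x := u/2) (by linarith) (by linarith)
      have h2 : Real.sin (u/2) = Real.sin (t/2) := by
        have : u/2 = π - t/2 := by simp [hu]; ring
        rw [this, Real.sin_pi_sub]
      calc u/π = 2/π * (u/2) := by field_simp
        _ ≤ Real.sin (u/2) := h1
        _ = Real.sin (t/2) := h2
    have hsq : u^2 ≤ 8*r*(Real.sin (t/2))^2 := by
      have hsin0 : 0 ≤ Real.sin (t/2) := by
        have h2 : Real.sin (u/2) = Real.sin (t/2) := by
          have : u/2 = π - t/2 := by simp [hu]; ring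
          rw [this, Real.sin_pi_sub]
        have := Real.sin_nonneg_of_nonneg_of_le_pi (x := u/2) (by linarith) (by linarith)
        linarith
      have h1 : (u/π)^2 ≤ (Real.sin (t/2))^2 := by
        apply sq_le_sq'
        · nlinarith [div_nonneg hu0 hπ0.le]
        · exact hsin
      have h2 : u^2 / π^2 ≤ (Real.sin (t/2))^2 := by
        calc u^2/π^2 = (u/π)^2 := by field_simp
          _ ≤ _ := h1
      have h3 : π^2 * (u^2/π^2) ≤ π^2 * (Real.sin (t/2))^2 :=
        mul_le_mul_of_nonneg_left h2 (by positivity)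
      have h4 : π^2 * (u^2/π^2) = u^2 := by field_simp
      have h5 : π^2 * (Real.sin (t/2))^2 ≤ 8*r*(Real.sin (t/2))^2 :=
        mul_le_mul_of_nonneg_right h8r (sq_nonneg _)
      linarith
    have hb : ε^2 + u^2 ≤ ‖1 - circleMap (-1) r t‖^2 := by
      rw [hkey]; nlinarith
    have hp1 : (0:ℝ) < ε^2 + u^2 := by positivity
    calc (‖1 - circleMap (-1) r t‖^2)⁻¹ ≤ (ε^2 + u^2)⁻¹ :=
          inv_anti₀ hp1 hb
      _ ≤ _ := le_add_of_nonneg_left (by positivity)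

/-- norm bound for the integrand kernel -/
lemma norm_G1' (h : Good A C τ) (hτ : 0 < τ) (hC : 0 ≤ C) {z : ℂ} (hz : z.re < 1) :
    ‖A * ((Rz A τ z * Rz A τ z) * Rz A τ z + Rz A τ z * (Rz A τ z * Rz A τ z))‖ ≤
      2*(C+1)*C^2 / τ * (‖1 - z‖^2)⁻¹ := by
  have h1z : (0:ℝ) < ‖1 - z‖ := by
    have : (1:ℂ) - z ≠ 0 := by
      intro hc
      have : z = 1 := by linear_combination -hc
      rw [this] at hz; simp at hz
    simpa [AbsoluteValue.pos_iff] using this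
  have hAR : ‖A * Rz A τ z‖ ≤ (C+1)/τ := by
    rw [le_div_iff₀ hτ]
    have := norm_A_mul_Rz h hτ hz
    linarith
  have hR : ‖Rz A τ z‖ ≤ C / ‖1 - z‖ := by
    rw [le_div_iff₀ h1z]
    have := norm_Rz_mul h hz
    simpa using this
  have hC1 : (0:ℝ) ≤ (C+1)/τ := by positivity
  have hRn : (0:ℝ) ≤ ‖Rz A τ z‖ := norm_nonneg _
  have hterm : ∀ w : X →L[ℂ] X, w = (Rz A τ z * Rz A τ z) * Rz A τ z ∨
      w = Rz A τ z * (Rz A τ z * Rz A τ z) →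
      ‖A * w‖ ≤ (C+1)/τ * (C / ‖1 - z‖)^2 := by
    intro w hw
    have hww : A * w = ((A * Rz A τ z) * Rz A τ z) * Rz A τ z := by
      rcases hw with hw | hw <;> rw [hw] <;> simp only [mul_assoc]
    have hw' : ‖A * w‖ ≤ ‖A * Rz A τ z‖ * ‖Rz A τ z‖ * ‖Rz A τ z‖ := by
      rw [hww]
      calc ‖((A * Rz A τ z) * Rz A τ z) * Rz A τ z‖
          ≤ ‖(A * Rz A τ z) * Rz A τ z‖ * ‖Rz A τ z‖ := norm_mul_le _ _
        _ ≤ ‖A * Rz A τ z‖ * ‖Rz A τ z‖ * ‖Rz A τ z‖ :=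
            mul_le_mul_of_nonneg_right (norm_mul_le _ _) hRn
    have hCd : (0:ℝ) ≤ C / ‖1-z‖ := by positivity
    calc ‖A * w‖ ≤ ‖A * Rz A τ z‖ * ‖Rz A τ z‖ * ‖Rz A τ z‖ := hw'
      _ ≤ ((C+1)/τ) * (C / ‖1-z‖) * (C / ‖1-z‖) := by
          apply mul_le_mul
          · exact mul_le_mul hAR hR hRn hC1
          · exact hR
          · exact hRn
          · positivity
      _ = (C+1)/τ * (C / ‖1 - z‖)^2 := by ring
  calc ‖A * ((Rz A τ z * Rz A τ z) * Rz A τ z + Rz A τ z * (Rz A τ z * Rz A τ z))‖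
      ≤ ‖A * ((Rz A τ z * Rz A τ z) * Rz A τ z)‖ +
        ‖A * (Rz A τ z * (Rz A τ z * Rz A τ z))‖ := by
        rw [mul_add]; exact norm_add_le _ _
    _ ≤ (C+1)/τ * (C / ‖1 - z‖)^2 + (C+1)/τ * (C / ‖1 - z‖)^2 := by
        have h1 := hterm _ (Or.inl rfl)
        have h2 := hterm _ (Or.inr rfl)
        linarith
    _ = 2*(C+1)*C^2 / τ * (‖1 - z‖^2)⁻¹ := by
        field_simp
        ring

/-- elementary bound (1 + 1/k)^k ≤ 3, in zpow form -/
lemma zpow_bound {n : ℕ} (hn : 2 ≤ n) {a : ℝ} (ha : 1 - 1/(n:ℝ) ≤ a) :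
    a ^ (-(n:ℤ) + 1) ≤ 3 := by
  set k := n - 1 with hk
  have hk1 : 1 ≤ k := by omega
  have hkn : n = k + 1 := by omega
  have hkR : (0:ℝ) < k := by exact_mod_cast hk1
  have hb : (0:ℝ) < 1 - 1/(n:ℝ) := by
    have hn2 : (2:ℝ) ≤ n := by exact_mod_cast hn
    have : 1/(n:ℝ) ≤ 1/2 := by
      apply div_le_div_of_nonneg_left <;> linarith
    linarith
  have ha0 : (0:ℝ) < a := lt_of_lt_of_le hb ha
  have hexp : -(n:ℤ) + 1 = -(k:ℤ) := by omega
  rw [hexp, zpow_neg, zpow_natCast]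
  -- (a^k)⁻¹ ≤ ((1-1/n)^k)⁻¹ = ((1+1/k)^k) ≤ e ≤ 3
  have hmono : (1 - 1/(n:ℝ))^k ≤ a^k := pow_le_pow_left₀ hb.le ha k
  have hp : (0:ℝ) < (1 - 1/(n:ℝ))^k := pow_pos hb k
  have h1 : (a^k)⁻¹ ≤ ((1 - 1/(n:ℝ))^k)⁻¹ := inv_anti₀ hp hmono
  have h2 : ((1 - 1/(n:ℝ))^k)⁻¹ = (1 + 1/(k:ℝ))^k := by
    rw [← inv_pow]
    congr 1
    have hnR : (n:ℝ) = (k:ℝ) + 1 := by exact_mod_cast congrArg (Nat.cast : ℕ → ℝ) hkn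
    rw [hnR]
    rw [show (1:ℝ) - 1/((k:ℝ)+1) = (k:ℝ)/((k:ℝ)+1) by field_simp; ring]
    rw [show (1:ℝ) + 1/(k:ℝ) = ((k:ℝ)+1)/(k:ℝ) by field_simp]
    rw [inv_div]
  have h4 : 1 + 1/(k:ℝ) ≤ Real.exp (1/(k:ℝ)) := by
    have := Real.add_one_le_exp (1/(k:ℝ)); linarith
  have h3 : (1 + 1/(k:ℝ))^k ≤ Real.exp 1 := by
    calc (1 + 1/(k:ℝ))^k ≤ (Real.exp (1/(k:ℝ)))^k := pow_le_pow_left₀ (by positivity) h4 k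
      _ = Real.exp ((k:ℕ) * (1/(k:ℝ))) := by rw [Real.exp_nat_mul]
      _ = Real.exp 1 := by
          congr 1
          field_simp
  have h5 : Real.exp 1 ≤ 3 := by
    have := Real.exp_one_lt_d9; linarith
  linarith


/-- norm bound of the main circle integral -/
lemma norm_V (h : Good A C τ) (hτ : 0 < τ) (hC : 0 ≤ C) (n : ℕ) (hn : 2 ≤ n) :
    ‖∮ z in C(-1, 2 - 1/(n:ℝ)), z ^ (-(n:ℤ) + 1) •
      (A * ((Rz A τ z * Rz A τ z) * Rz A τ z + Rz A τ z * (Rz A τ z * Rz A τ z)))‖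
      ≤ 12*π*(C+1)*C^2/τ * n := by
  have hn2 : (2:ℝ) ≤ (n:ℝ) := by exact_mod_cast hn
  have hnpos : (0:ℝ) < n := by linarith
  set r : ℝ := 2 - 1/(n:ℝ) with hrdef
  have hinv : 1/(n:ℝ) ≤ 1/2 := by
    apply div_le_div_of_nonneg_left <;> linarith
  have hinv0 : 0 < 1/(n:ℝ) := by positivity
  have hr32 : 3/2 ≤ r := by rw [hrdef]; linarith
  have hr1 : 1 < r := lt_of_lt_of_le (by norm_num) hr32
  have hr2 : r < 2 := by rw [hrdef]; linarith
  have hr0 : (0:ℝ) ≤ r := by linarith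
  have hε0 : 0 < 2 - r := by linarith
  set f : ℂ → (X →L[ℂ] X) := fun z => z ^ (-(n:ℤ) + 1) •
      (A * ((Rz A τ z * Rz A τ z) * Rz A τ z + Rz A τ z * (Rz A τ z * Rz A τ z))) with hfdef
  have hcontf : ContinuousOn f (sphere (-1 : ℂ) r) := by
    intro z hz
    have hz0 : z ≠ 0 := ne_zero_of_mem_sphere hr1 hz
    have hz1 : z.re < 1 := re_lt_one_of_mem_closedBall hr2 (sphere_subset_closedBall hz)
    have hcR : ContinuousAt (Rz A τ) z := (hasDerivAt_Rz h hz1).continuousAt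
    exact ((continuousAt_zpow₀ z _ (Or.inl hz0)).smul
      (continuousAt_const.mul (((hcR.mul hcR).mul hcR).add
        (hcR.mul (hcR.mul hcR))))).continuousWithinAt
  have hci : CircleIntegrable f (-1) r := ContinuousOn.circleIntegrable hr0 hcontf
  set Q : ℝ := 12*(C+1)*C^2/τ with hQdef
  have hQ0 : 0 ≤ Q := by positivity
  set g : ℝ → ℝ := fun t => Q * (((2-r)^2 + t^2)⁻¹ + ((2-r)^2 + (2*π - t)^2)⁻¹) with hgdef
  have hgcont : Continuous g := by
    apply continuous_const.mul
    apply Continuous.add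
    · exact (continuous_const.add (continuous_id.pow 2)).inv₀
        (fun t => (add_pos_of_pos_of_nonneg (pow_pos hε0 2) (sq_nonneg _)).ne')
    · exact (continuous_const.add ((continuous_const.sub continuous_id).pow 2)).inv₀
        (fun t => (add_pos_of_pos_of_nonneg (pow_pos hε0 2) (sq_nonneg _)).ne')
  have step1 : ‖∮ z in C(-1, r), f z‖ ≤
      ∫ t in (0:ℝ)..(2*π), ‖deriv (circleMap (-1) r) t • f (circleMap (-1) r t)‖ := by
    rw [circleIntegral]
    exact intervalIntegral.norm_integral_le_integral_norm Real.two_pi_pos.le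
  have hptwise : ∀ t ∈ Icc (0:ℝ) (2*π),
      ‖deriv (circleMap (-1) r) t • f (circleMap (-1) r t)‖ ≤ g t := by
    intro t ht
    set z := circleMap (-1) r t with hzdef
    have hzs : z ∈ sphere (-1 : ℂ) r := circleMap_mem_sphere _ hr0 _
    have hz0 : z ≠ 0 := ne_zero_of_mem_sphere hr1 hzs
    have hz1 : z.re < 1 := re_lt_one_of_mem_closedBall hr2 (sphere_subset_closedBall hzs)
    have habs : 1 - 1/(n:ℝ) ≤ ‖z‖ := by
      have h1 : ‖z + 1‖ = r := by
        have := hzs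
        rw [mem_sphere, Complex.dist_eq] at this
        simpa [sub_neg_eq_add] using this
      have h2 : ‖z + 1‖ ≤ ‖z‖ + 1 := by
        simpa using norm_add_le z 1
      rw [hrdef] at h1
      linarith
    have e1 : ‖deriv (circleMap (-1) r) t • f z‖ = r * ‖f z‖ := by
      rw [norm_smul (deriv (circleMap (-1) r) t) (f z)]
      congr 1
      rw [deriv_circleMap, norm_mul, norm_circleMap_zero,
        Complex.norm_I, mul_one, _root_.abs_of_nonneg hr0]
    have e2 : ‖f z‖ = ‖z‖ ^ (-(n:ℤ) + 1) *
        ‖A * ((Rz A τ z * Rz A τ z) * Rz A τ z + Rz A τ z * (Rz A τ z * Rz A τ z))‖ := by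
      show ‖z ^ (-(n:ℤ)+1) • (A * ((Rz A τ z * Rz A τ z) * Rz A τ z +
        Rz A τ z * (Rz A τ z * Rz A τ z)))‖ = _
      rw [norm_smul (z ^ (-(n:ℤ)+1)) (A * ((Rz A τ z * Rz A τ z) * Rz A τ z +
        Rz A τ z * (Rz A τ z * Rz A τ z)))]
      congr 1
      rw [norm_zpow]
    have b1 : ‖z‖ ^ (-(n:ℤ) + 1) ≤ 3 := zpow_bound hn habs
    have b1' : (0:ℝ) ≤ ‖z‖ ^ (-(n:ℤ) + 1) := by positivity
    have b2 := norm_G1' h hτ hC hz1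
    have b3 : (‖1 - z‖^2)⁻¹ ≤
        ((2-r)^2 + t^2)⁻¹ + ((2-r)^2 + (2*π - t)^2)⁻¹ :=
      inv_abs_sq_le hr32 hr2 ht.1 ht.2
    have hP0 : (0:ℝ) ≤ ((2-r)^2 + t^2)⁻¹ + ((2-r)^2 + (2*π - t)^2)⁻¹ := by positivity
    have b4 : ‖A * ((Rz A τ z * Rz A τ z) * Rz A τ z + Rz A τ z * (Rz A τ z * Rz A τ z))‖ ≤
        2*(C+1)*C^2/τ * (((2-r)^2 + t^2)⁻¹ + ((2-r)^2 + (2*π - t)^2)⁻¹) := by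
      calc ‖A * ((Rz A τ z * Rz A τ z) * Rz A τ z + Rz A τ z * (Rz A τ z * Rz A τ z))‖
          ≤ 2*(C+1)*C^2/τ * (‖1 - z‖^2)⁻¹ := b2
        _ ≤ _ := by
            apply mul_le_mul_of_nonneg_left b3 (by positivity)
    rw [e1, e2]
    calc r * (‖z‖ ^ (-(n:ℤ) + 1) *
          ‖A * ((Rz A τ z * Rz A τ z) * Rz A τ z + Rz A τ z * (Rz A τ z * Rz A τ z))‖)
        ≤ 2 * (3 * (2*(C+1)*C^2/τ *
            (((2-r)^2 + t^2)⁻¹ + ((2-r)^2 + (2*π - t)^2)⁻¹))) := by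
          apply mul_le_mul (by linarith) ?_ (by positivity) (by norm_num)
          apply mul_le_mul b1 b4 (norm_nonneg _) (by norm_num)
      _ = g t := by rw [hgdef, hQdef]; ring
  have hlhs_int : IntervalIntegrable
      (fun t => ‖deriv (circleMap (-1) r) t • f (circleMap (-1) r t)‖)
      MeasureTheory.volume 0 (2*π) := hci.out.norm
  have step2 : ∫ t in (0:ℝ)..(2*π), ‖deriv (circleMap (-1) r) t • f (circleMap (-1) r t)‖ ≤
      ∫ t in (0:ℝ)..(2*π), g t :=
    intervalIntegral.integral_mono_on Real.two_pi_pos.le hlhs_int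
      (hgcont.intervalIntegrable _ _) hptwise
  have hint1 : IntervalIntegrable (fun t : ℝ => ((2-r)^2 + t^2)⁻¹)
      MeasureTheory.volume 0 (2*π) := by
    apply Continuous.intervalIntegrable
    exact (continuous_const.add (continuous_id.pow 2)).inv₀ (fun t => (add_pos_of_pos_of_nonneg (pow_pos hε0 2) (sq_nonneg _)).ne')
  have hint2 : IntervalIntegrable (fun t : ℝ => ((2-r)^2 + (2*π - t)^2)⁻¹)
      MeasureTheory.volume 0 (2*π) := by
    apply Continuous.intervalIntegrable
    exact (continuous_const.add ((continuous_const.sub continuous_id).pow 2)).inv₀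
      (fun t => (add_pos_of_pos_of_nonneg (pow_pos hε0 2) (sq_nonneg _)).ne')
  have harct := integral_inv_sq_add_le (ε := 2 - r) hε0
  have harct2 : ∫ t in (0:ℝ)..(2*π), ((2-r)^2 + (2*π - t)^2)⁻¹ ≤ (2-r)⁻¹ * (π/2) := by
    have hcs := intervalIntegral.integral_comp_sub_left
      (fun u : ℝ => ((2-r)^2 + u^2)⁻¹) (2*π) (a := 0) (b := 2*π)
    simp only [sub_self, sub_zero] at hcs
    rw [hcs]
    exact harct
  have step3 : ∫ t in (0:ℝ)..(2*π), g t ≤ Q * ((2-r)⁻¹ * (π/2) + (2-r)⁻¹ * (π/2)) := by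
    rw [hgdef]
    rw [intervalIntegral.integral_const_mul]
    apply mul_le_mul_of_nonneg_left ?_ hQ0
    rw [intervalIntegral.integral_add hint1 hint2]
    exact add_le_add harct harct2
  have hfinal : Q * ((2-r)⁻¹ * (π/2) + (2-r)⁻¹ * (π/2)) = 12*π*(C+1)*C^2/τ * n := by
    have h2r : 2 - r = 1/(n:ℝ) := by rw [hrdef]; ring
    rw [h2r, hQdef]
    rw [one_div, inv_inv]
    field_simp
    ring
  calc ‖∮ z in C(-1, r), f z‖ ≤ _ := step1
    _ ≤ _ := step2
    _ ≤ _ := step3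
    _ = _ := hfinal

lemma key_estimate (h : Good A C τ) (hτ : 0 < τ) (hC : 0 ≤ C) (n : ℕ) (hn : 2 ≤ n) :
    ‖A * (Rz A τ 0) ^ (n+1)‖ * ((n:ℝ) - 1) ≤ 6*(C+1)*C^2/τ := by
  have hn2 : (2:ℝ) ≤ (n:ℝ) := by exact_mod_cast hn
  have hnpos : (0:ℝ) < n := by linarith
  have hinv : 1/(n:ℝ) ≤ 1/2 := by
    apply div_le_div_of_nonneg_left <;> linarith
  have hr32 : (3:ℝ)/2 ≤ 2 - 1/(n:ℝ) := by linarith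
  have hr1 : 1 < 2 - 1/(n:ℝ) := by linarith
  have hr2 : 2 - 1/(n:ℝ) < 2 := by
    have : 0 < 1/(n:ℝ) := by positivity
    linarith
  have hcomb := combined (r := 2 - 1/(n:ℝ)) h hr1 hr2 n hn
  have hV := norm_V h hτ hC n hn
  set V := ∮ z in C(-1, 2 - 1/(n:ℝ)), z ^ (-(n:ℤ) + 1) •
      (A * ((Rz A τ z * Rz A τ z) * Rz A τ z + Rz A τ z * (Rz A τ z * Rz A τ z))) with hVdef
  set XX := A * (Rz A τ 0) ^ (n+1) with hXXdef
  have hnorm := congrArg norm hcomb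
  rw [norm_smul (2 * (π:ℂ) * I) XX, norm_smul ((n:ℂ)⁻¹ * ((n:ℂ) - 1)⁻¹) V] at hnorm
  have hs1 : ‖(2 * (π:ℂ) * I)‖ = 2*π := by
    rw [norm_mul, norm_mul, Complex.norm_I, mul_one]
    simp [Complex.norm_real, _root_.abs_of_pos Real.pi_pos]
  have hs2 : ‖(n:ℂ)⁻¹ * ((n:ℂ) - 1)⁻¹‖ = ((n:ℝ) * ((n:ℝ) - 1))⁻¹ := by
    rw [norm_mul, norm_inv, norm_inv]
    have c1 : ‖(n:ℂ)‖ = (n:ℝ) := by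
      simp [Complex.norm_natCast]
    have c2 : ‖(n:ℂ) - 1‖ = (n:ℝ) - 1 := by
      have : (n:ℂ) - 1 = (((n:ℝ) - 1 : ℝ) : ℂ) := by push_cast; ring
      rw [this, Complex.norm_real]
      rw [Real.norm_eq_abs, _root_.abs_of_pos (by linarith)]
    rw [c1, c2, mul_inv]
  rw [hs1, hs2] at hnorm
  have hn1pos : (0:ℝ) < (n:ℝ) - 1 := by linarith
  have hEq' : 2*π*‖XX‖*((n:ℝ)*((n:ℝ) - 1)) = ‖V‖ := by
    have hne : ((n:ℝ)*((n:ℝ) - 1)) ≠ 0 := by positivity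
    field_simp at hnorm ⊢
    linarith [hnorm]
  have hchain : (2*π*(n:ℝ)) * (‖XX‖*((n:ℝ) - 1)) ≤ (2*π*(n:ℝ)) * (6*(C+1)*C^2/τ) := by
    have e : (2*π*(n:ℝ)) * (‖XX‖*((n:ℝ) - 1)) = 2*π*‖XX‖*((n:ℝ)*((n:ℝ) - 1)) := by ring
    have e2 : (2*π*(n:ℝ)) * (6*(C+1)*C^2/τ) = 12*π*(C+1)*C^2/τ * n := by ring
    rw [e, hEq', e2]
    exact hV
  exact le_of_mul_le_mul_left hchain (by positivity)

end BEproof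

open BEproof in
/-- The convolution quadrature kernel of the backward Euler scheme satisfies
‖A (I − τA)^{-n}‖ ≤ K/(nτ), given a uniform resolvent bound on a sector of
angle θ > π/2 (Lemma 7.1 of Kovács–Li–Lubich, for the one-step BDF method). -/
theorem backward_euler_kernel_bound
    {X : Type*} [NormedAddCommGroup X] [NormedSpace ℂ X] [CompleteSpace X]
    (θ : ℝ) (hθ1 : Real.pi / 2 < θ) (hθ2 : θ < Real.pi)
    (A : X →L[ℂ] X) (C : ℝ) (hC : 0 ≤ C)
    (hres : ∀ lam : ℂ, lam ≠ 0 → |Complex.arg lam| < θ →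
      ∃ B : X →L[ℂ] X, (lam • (1 : X →L[ℂ] X) - A) * B = 1 ∧
        B * (lam • (1 : X →L[ℂ] X) - A) = 1 ∧ ‖lam • B‖ ≤ C) :
    ∃ K : ℝ, ∀ τ : ℝ, 0 < τ →
      IsUnit (1 - (τ : ℂ) • A) ∧
      ∀ n : ℕ, 1 ≤ n →
        ‖A * (Ring.inverse (1 - (τ : ℂ) • A)) ^ n‖ ≤ K / (n * τ) := by
  refine ⟨18*(C+1)^3, fun τ hτ => ?_⟩
  have hτ0 : ((τ:ℝ) : ℂ) ≠ 0 := by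
    simp only [ne_eq, Complex.ofReal_eq_zero]
    exact hτ.ne'
  have hgood : Good A C τ := by
    intro w hw
    have hlam_re : 0 < (w / (τ:ℂ)).re := by
      rw [Complex.div_ofReal_re]
      positivity
    have hlam0 : w / (τ:ℂ) ≠ 0 := by
      intro hcon
      rw [hcon] at hlam_re
      simp at hlam_re
    have harg : |Complex.arg (w / (τ:ℂ))| < θ := by
      have h1 : |Complex.arg (w / (τ:ℂ))| < Real.pi / 2 :=
        Complex.abs_arg_lt_pi_div_two_iff.mpr (Or.inl hlam_re)
      linarith
    obtain ⟨B, h1, h2, h3⟩ := hres (w / (τ:ℂ)) hlam0 harg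
    have hmul : (τ:ℂ) * (w / (τ:ℂ)) = w := by field_simp
    have hMeq : w • (1 : X →L[ℂ] X) - (τ:ℂ) • A =
        (τ:ℂ) • ((w / (τ:ℂ)) • (1 : X →L[ℂ] X) - A) := by
      rw [smul_sub, smul_smul, hmul]
    refine ⟨(τ:ℂ)⁻¹ • B, ?_, ?_, ?_⟩
    · rw [hMeq, smul_mul_smul_comm, mul_inv_cancel₀ hτ0, one_smul]
      exact h1
    · rw [hMeq, smul_mul_smul_comm, inv_mul_cancel₀ hτ0, one_smul]
      exact h2
    · rw [smul_smul]
      rw [show w * (τ:ℂ)⁻¹ = w / (τ:ℂ) from (div_eq_mul_inv w _).symm]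
      exact h3
  have h0re : (0:ℂ).re < 1 := by norm_num
  have hu0 : IsUnit (Mz A τ 0) := good_isUnit hgood h0re
  have hMz0 : Mz A τ 0 = 1 - (τ:ℂ) • A := by simp [Mz]
  have hS_norm : ‖Rz A τ 0‖ ≤ C := by
    have := norm_smul_Rz hgood h0re
    simpa using this
  have hAS : ‖A * Rz A τ 0‖ ≤ (C+1)/τ := by
    rw [le_div_iff₀ hτ]
    have := norm_A_mul_Rz hgood hτ h0re
    linarith
  constructor
  · rw [← hMz0]; exact hu0
  intro m hm
  rw [← Rz_zero]
  have hK0 : (0:ℝ) < 18*(C+1)^3 := by positivity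
  have h1K : C + 1 ≤ 18*(C+1)^3 := by
    have h1 : (1:ℝ) ≤ C+1 := by linarith
    have h2 : (C+1) ≤ (C+1)^3 := le_self_pow₀ h1 (by norm_num)
    have h3 : (0:ℝ) < (C+1)^3 := by positivity
    linarith
  rcases eq_or_lt_of_le hm with hm1 | hm2
  · -- m = 1
    rw [← hm1]
    simp only [pow_one, Nat.cast_one, one_mul]
    calc ‖A * Rz A τ 0‖ ≤ (C+1)/τ := hAS
      _ ≤ 18*(C+1)^3/τ := by gcongr
  rcases eq_or_lt_of_le (Nat.succ_le_of_lt hm2) with hm2' | hm3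
  · -- m = 2
    have hm2'' : m = 2 := by omega
    subst hm2''
    push_cast
    have e : A * Rz A τ 0 ^ 2 = (A * Rz A τ 0) * Rz A τ 0 := by
      rw [pow_two, mul_assoc]
    rw [e]
    have hb : ‖(A * Rz A τ 0) * Rz A τ 0‖ ≤ (C+1)/τ * C := by
      calc ‖(A * Rz A τ 0) * Rz A τ 0‖ ≤ ‖A * Rz A τ 0‖ * ‖Rz A τ 0‖ := norm_mul_le _ _
        _ ≤ (C+1)/τ * C := by
            apply mul_le_mul hAS hS_norm (norm_nonneg _) (by positivity)
    refine hb.trans ?_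
    rw [div_mul_eq_mul_div, div_le_div_iff₀ hτ (by positivity : (0:ℝ) < 2*τ)]
    have hcc : 2*C*(C+1) ≤ 18*(C+1)^3 := by nlinarith [hC, sq_nonneg C, sq_nonneg (C+1)]
    calc (C+1)*C*(2*τ) = (2*C*(C+1))*τ := by ring
      _ ≤ (18*(C+1)^3)*τ := mul_le_mul_of_nonneg_right hcc hτ.le
  · -- m ≥ 3
    have hm3' : 3 ≤ m := hm3
    set n := m - 1 with hndef
    have hn : 2 ≤ n := by omega
    have hm_eq : n + 1 = m := by omega
    have hkey := key_estimate hgood hτ hC n hn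
    rw [hm_eq] at hkey
    have hnm : (n:ℝ) - 1 = (m:ℝ) - 2 := by
      have : (n:ℝ) = (m:ℝ) - 1 := by
        have : ((n:ℕ):ℝ) = ((m:ℕ):ℝ) - 1 := by
          rw [← hm_eq]; push_cast; ring
        exact this
      rw [this]; ring
    rw [hnm] at hkey
    have hmR : (3:ℝ) ≤ (m:ℝ) := by exact_mod_cast hm3'
    rw [le_div_iff₀ (by positivity : (0:ℝ) < (m:ℝ) * τ)]
    have h' : ‖A * Rz A τ 0 ^ m‖ * ((m:ℝ) - 2) * τ ≤ 6*(C+1)*C^2 := by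
      have := (le_div_iff₀ hτ).mp hkey
      linarith
    have ha0 : (0:ℝ) ≤ ‖A * Rz A τ 0 ^ m‖ := norm_nonneg _
    have haτ : (0:ℝ) ≤ ‖A * Rz A τ 0 ^ m‖ * τ := mul_nonneg ha0 hτ.le
    have hstep : ‖A * Rz A τ 0 ^ m‖ * ((m:ℝ) * τ) ≤ 3 * (‖A * Rz A τ 0 ^ m‖ * ((m:ℝ) - 2) * τ) := by
      nlinarith [haτ, hmR]
    have hstep2 : (3:ℝ) * (‖A * Rz A τ 0 ^ m‖ * ((m:ℝ) - 2) * τ) ≤ 18*(C+1)*C^2 := by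
      linarith
    have hstep3 : (18:ℝ)*(C+1)*C^2 ≤ 18*(C+1)^3 := by nlinarith
    linarith
end

section
/- Let s ≥ 1, let 𝒪 be a complex s×s matrix, b ∈ ℂ^s, 𝟙 = (1,…,1)ᵀ ∈ ℂ^s, and let z, ζ ∈ ℂ with ζ ≠ 1. Assume I − z𝒪 is invertible, set R(z) = 1 + z·bᵀ(I − z𝒪)^{-1}𝟙, and assume R(z)ζ ≠ 1. Let T = 𝒪 + (ζ/(1−ζ))·𝟙bᵀ (where 𝟙bᵀ denotes the rank-one matrix with entries (𝟙bᵀ)_{ij} = b_j). Then I − zT is invertible and (I − zT)^{-1} T = 𝒪(I − z𝒪)^{-1} + (ζ/(1 − R(z)ζ)) · (I − z𝒪)^{-1} 𝟙 bᵀ (I − z𝒪)^{-1}. -/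
open Matrix

lemma my_vecMulVec_mul {n : ℕ} (M : Matrix (Fin n) (Fin n) ℂ) (u v : Fin n → ℂ) :
    vecMulVec u v * M = vecMulVec u (v ᵥ* M) := by
  ext i j
  simp [Matrix.mul_apply, vecMulVec_apply, Matrix.vecMul, dotProduct, Finset.mul_sum, mul_assoc]

lemma my_vecMulVec_mul_vecMulVec {n : ℕ} (u v u' v' : Fin n → ℂ) :
    vecMulVec u v * vecMulVec u' v' = (v ⬝ᵥ u') • vecMulVec u v' := by
  ext i j
  simp only [Matrix.mul_apply, vecMulVec_apply, dotProduct, Matrix.smul_apply, smul_eq_mul,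
    Finset.sum_mul, Finset.mul_sum]
  refine Finset.sum_congr rfl fun k _ => by ring

lemma my_sandwich {n : ℕ} (M : Matrix (Fin n) (Fin n) ℂ) (u v : Fin n → ℂ) :
    vecMulVec u v * M * vecMulVec u v = (v ⬝ᵥ (M *ᵥ u)) • vecMulVec u v := by
  rw [my_vecMulVec_mul, my_vecMulVec_mul_vecMulVec, Matrix.dotProduct_mulVec]

/-- The resolvent formula (5.2) for the matrix symbol of a Runge–Kutta method
(Lubich–Ostermann, Lemma 2.4): with T = 𝒪 + (ζ/(1−ζ))𝟙bᵀ one has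
(I − zT)⁻¹ T = 𝒪(I − z𝒪)⁻¹ + (ζ/(1 − R(z)ζ)) (I − z𝒪)⁻¹ 𝟙bᵀ (I − z𝒪)⁻¹. -/
theorem runge_kutta_symbol_resolvent_formula
    (s : ℕ) (hs : 1 ≤ s)
    (𝒪 : Matrix (Fin s) (Fin s) ℂ) (b : Fin s → ℂ) (z ζ : ℂ) (hζ : ζ ≠ 1)
    (hz : IsUnit (1 - z • 𝒪))
    (hR : (1 + z * (b ⬝ᵥ ((1 - z • 𝒪)⁻¹ *ᵥ fun _ => 1))) * ζ ≠ 1) :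
    IsUnit (1 - z • (𝒪 + (ζ / (1 - ζ)) • vecMulVec (fun _ => 1) b)) ∧
      (1 - z • (𝒪 + (ζ / (1 - ζ)) • vecMulVec (fun _ => 1) b))⁻¹
          * (𝒪 + (ζ / (1 - ζ)) • vecMulVec (fun _ => 1) b)
        = 𝒪 * (1 - z • 𝒪)⁻¹
          + (ζ / (1 - (1 + z * (b ⬝ᵥ ((1 - z • 𝒪)⁻¹ *ᵥ fun _ => 1))) * ζ)) •
            ((1 - z • 𝒪)⁻¹ * vecMulVec (fun _ => 1) b * (1 - z • 𝒪)⁻¹) := by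
  set u : Fin s → ℂ := fun _ => 1 with hu
  set A : Matrix (Fin s) (Fin s) ℂ := 1 - z • 𝒪 with hAdef
  set V : Matrix (Fin s) (Fin s) ℂ := vecMulVec u b with hVdef
  set α : ℂ := b ⬝ᵥ (A⁻¹ *ᵥ u) with hαdef
  set c : ℂ := ζ / (1 - ζ) with hcdef
  set e : ℂ := ζ / (1 - (1 + z * α) * ζ) with hedef
  have hζ' : (1 : ℂ) - ζ ≠ 0 := sub_ne_zero.mpr fun h => hζ h.symm
  have hRζ : (1 : ℂ) - (1 + z * α) * ζ ≠ 0 := sub_ne_zero.mpr fun h => hR h.symm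
  set d : ℂ := 1 - z * c * α with hddef
  have hd : d ≠ 0 := by
    have hdeq : d = (1 - (1 + z * α) * ζ) / (1 - ζ) := by
      rw [hddef, hcdef]; field_simp; ring
    rw [hdeq]; exact div_ne_zero hRζ hζ'
  clear_value u A V α c e d
  have hAdet : IsUnit A.det := (Matrix.isUnit_iff_isUnit_det A).mp hz
  have hAAi : A * A⁻¹ = 1 := Matrix.mul_nonsing_inv A hAdet
  have hAiA : A⁻¹ * A = 1 := Matrix.nonsing_inv_mul A hAdet
  have hVAV : V * (A⁻¹ * V) = α • V := by
    rw [← Matrix.mul_assoc, hVdef, my_sandwich, ← hαdef]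
  have hVAVA : V * (A⁻¹ * (V * A⁻¹)) = α • (V * A⁻¹) := by
    rw [show A⁻¹ * (V * A⁻¹) = (A⁻¹ * V) * A⁻¹ from (Matrix.mul_assoc _ _ _).symm,
      ← Matrix.mul_assoc, hVAV, Matrix.smul_mul]
  set T : Matrix (Fin s) (Fin s) ℂ := 𝒪 + c • V with hTdef
  clear_value T
  have hN : 1 - z • T = A - (z * c) • V := by
    rw [hTdef, hAdef, smul_add, smul_smul]; abel
  set W : Matrix (Fin s) (Fin s) ℂ := A⁻¹ + (z * c / d) • (A⁻¹ * (V * A⁻¹)) with hWdef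
  clear_value W
  have hNW : (1 - z • T) * W = 1 := by
    rw [hN, hWdef]
    simp only [Matrix.sub_mul, Matrix.mul_add, Matrix.add_mul, Matrix.smul_mul,
      Matrix.mul_smul, Matrix.mul_assoc, Matrix.mul_nonsing_inv_cancel_left A _ hAdet,
      hAAi, hVAVA, smul_smul]
    match_scalars
    all_goals try ring
    all_goals (field_simp; linear_combination (-(z * c)) * hddef)

  have hWN : W * (1 - z • T) = 1 := by
    rw [hN, hWdef]
    simp only [Matrix.sub_mul, Matrix.mul_sub, Matrix.mul_add, Matrix.add_mul, Matrix.smul_mul,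
      Matrix.mul_smul, Matrix.mul_assoc, hAiA, Matrix.mul_one,
      Matrix.nonsing_inv_mul_cancel_right A _ hAdet, hVAV, smul_smul]
    match_scalars
    all_goals try ring
    all_goals (field_simp; linear_combination (-(z * c)) * hddef)

  have hUnit : IsUnit (1 - z • T) := ⟨⟨1 - z • T, W, hNW, hWN⟩, rfl⟩
  refine ⟨hUnit, ?_⟩
  -- the right-hand side X
  set X : Matrix (Fin s) (Fin s) ℂ := 𝒪 * A⁻¹ + e • (A⁻¹ * V * A⁻¹) with hXdef
  clear_value X
  have hA𝒪 : A * 𝒪 = 𝒪 * A := by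
    rw [hAdef]; simp [Matrix.sub_mul, Matrix.mul_sub, Matrix.smul_mul, Matrix.mul_smul]
  have hV𝒪A : (z * c) • (V * (𝒪 * A⁻¹)) = c • (V * A⁻¹) - c • V := by
    have hz𝒪 : z • 𝒪 = 1 - A := by rw [hAdef]; abel
    have h0 : (z * c) • (V * (𝒪 * A⁻¹)) = c • (V * ((z • 𝒪) * A⁻¹)) := by
      simp only [Matrix.smul_mul, Matrix.mul_smul, smul_smul]
      rw [mul_comm z c]
    rw [h0, hz𝒪, Matrix.sub_mul, Matrix.one_mul, Matrix.mul_sub, hAAi, Matrix.mul_one,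
      smul_sub]
  have hedc : e * (1 - z * c * α) = c := by
    rw [hedef, hcdef, div_mul_eq_mul_div, div_eq_iff hRζ]; linear_combination (-ζ) * mul_inv_cancel₀ hζ'
  have hNX : (1 - z • T) * X = T := by
    have h1 : A * (𝒪 * A⁻¹) = 𝒪 := by
      rw [← Matrix.mul_assoc, hA𝒪, Matrix.mul_assoc, hAAi, Matrix.mul_one]
    have h2 : A * (A⁻¹ * V * A⁻¹) = V * A⁻¹ := by
      rw [Matrix.mul_assoc A⁻¹ V A⁻¹, Matrix.mul_nonsing_inv_cancel_left A _ hAdet]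
    have h3 : V * (A⁻¹ * V * A⁻¹) = α • (V * A⁻¹) := by
      rw [Matrix.mul_assoc A⁻¹ V A⁻¹]; exact hVAVA
    rw [hN, hXdef, hTdef]
    simp only [Matrix.sub_mul, Matrix.mul_add, Matrix.smul_mul, Matrix.mul_smul]
    rw [h1, h2, h3, hV𝒪A]
    match_scalars
    all_goals try ring
    all_goals linear_combination hedc
  calc (1 - z • T)⁻¹ * T = (1 - z • T)⁻¹ * ((1 - z • T) * X) := by rw [hNX]
    _ = X := by
        rw [← Matrix.mul_assoc, Matrix.nonsing_inv_mul _ ((Matrix.isUnit_iff_isUnit_det _).mp hUnit), Matrix.one_mul]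
end

section
/- Let s ≥ 1, let 𝒪 be an invertible complex s×s matrix, b ∈ ℂ^s, 𝟙 = (1,…,1)ᵀ ∈ ℂ^s, and let ζ ∈ ℂ with ζ ≠ 1 be such that the matrix T = 𝒪 + (ζ/(1−ζ))·𝟙bᵀ is invertible, and set Δ(ζ) = T^{-1}. Then every z in the spectrum of Δ(ζ) satisfies: either z is in the spectrum of 𝒪^{-1}, or the matrix I − z𝒪 is invertible and R(z)ζ = 1, where R(z) = 1 + z·bᵀ(I − z𝒪)^{-1}𝟙. -/
open Matrix

/-- The spectrum inclusion σ(Δ(ζ)) ⊆ σ(𝒪⁻¹) ∪ {z : R(z)ζ = 1} for the matrix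
symbol Δ(ζ) = (𝒪 + (ζ/(1−ζ))𝟙bᵀ)⁻¹ of a Runge–Kutta method, used in the proof
of Theorem 5.3 of Kovács–Li–Lubich. -/
theorem runge_kutta_symbol_spectrum_inclusion
    (s : ℕ) (hs : 1 ≤ s)
    (𝒪 : Matrix (Fin s) (Fin s) ℂ) (b : Fin s → ℂ) (h𝒪 : IsUnit 𝒪)
    (ζ : ℂ) (hζ : ζ ≠ 1)
    (hT : IsUnit (𝒪 + (ζ / (1 - ζ)) • vecMulVec (fun _ => 1) b))
    (z : ℂ)
    (hz : z ∈ spectrum ℂ ((𝒪 + (ζ / (1 - ζ)) • vecMulVec (fun _ => 1) b)⁻¹)) :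
    z ∈ spectrum ℂ 𝒪⁻¹ ∨
      (IsUnit (1 - z • 𝒪) ∧
        (1 + z * (b ⬝ᵥ ((1 - z • 𝒪)⁻¹ *ᵥ fun _ => 1))) * ζ = 1) := by
  set c : ℂ := ζ / (1 - ζ) with hc
  set T : Matrix (Fin s) (Fin s) ℂ := 𝒪 + c • vecMulVec (fun _ => 1) b with hTdef
  have h1ζ : (1 : ℂ) - ζ ≠ 0 := sub_ne_zero.mpr (Ne.symm hζ)
  by_cases h : IsUnit (1 - z • 𝒪)
  · right
    refine ⟨h, ?_⟩
    rw [spectrum.mem_iff, Algebra.algebraMap_eq_smul_one] at hz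
    have hTd : IsUnit T.det := (Matrix.isUnit_iff_isUnit_det T).mp hT
    have hTinv : IsUnit T⁻¹ :=
      (Matrix.isUnit_iff_isUnit_det _).mpr (Matrix.isUnit_nonsing_inv_det T hTd)
    -- det (z • T - 1) = 0
    have hdet : (z • T - 1).det = 0 := by
      by_contra hne
      apply hz
      have hu : IsUnit (z • T - 1) :=
        (Matrix.isUnit_iff_isUnit_det _).mpr (isUnit_iff_ne_zero.mpr hne)
      have := hu.mul hTinv
      rwa [Matrix.sub_mul, Matrix.smul_mul, Matrix.mul_nonsing_inv T hTd,
        Matrix.one_mul] at this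
    -- rewrite z • T - 1 as -((1 - z•𝒪) + col u * row b)
    have hM : IsUnit (1 - z • 𝒪).det := (Matrix.isUnit_iff_isUnit_det _).mp h
    have hrw : z • T - 1 =
        -((1 - z • 𝒪) + replicateCol Unit (fun _ => -(z * c)) * replicateRow Unit b) := by
      rw [← Matrix.vecMulVec_eq]
      ext i j
      simp [hTdef, vecMulVec_apply, Matrix.one_apply, Matrix.sub_apply, Matrix.add_apply]
      ring
    rw [hrw, Matrix.det_neg, Matrix.det_add_replicateCol_mul_replicateRow hM] at hdet
    have hdet2 : ((1 : Matrix Unit Unit ℂ) + replicateRow Unit b * (1 - z • 𝒪)⁻¹ * replicateCol Unit (fun _ => -(z * c))).det = 0 := by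
      rcases mul_eq_zero.mp hdet with h0 | h0
      · exact absurd h0 (by simp)
      · rcases mul_eq_zero.mp h0 with h0 | h0
        · exact absurd h0 hM.ne_zero
        · exact h0
    rw [Matrix.det_unique] at hdet2
    have key : 1 + b ⬝ᵥ ((1 - z • 𝒪)⁻¹ *ᵥ fun _ => -(z * c)) = 0 := by
      rw [← hdet2, Matrix.add_apply, Matrix.one_apply_eq, Matrix.dotProduct_mulVec,
        ← Matrix.replicateRow_mul_replicateCol_apply (ι := Unit) (i := default) (j := default), Matrix.replicateRow_vecMul, Matrix.mul_assoc]
      exact congrArg (fun M : Matrix Unit Unit ℂ => 1 + M default default) (Matrix.mul_assoc _ _ _).symm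
    have hv : (fun _ : Fin s => -(z * c)) = (-(z * c)) • (fun _ : Fin s => (1:ℂ)) := by
      ext i; simp
    rw [hv, Matrix.mulVec_smul, dotProduct_smul, smul_eq_mul] at key
    set r : ℂ := b ⬝ᵥ ((1 - z • 𝒪)⁻¹ *ᵥ fun _ => (1:ℂ)) with hr
    -- key : 1 + -(z * c) * r = 0, c = ζ/(1-ζ)
    rw [hc] at key
    field_simp at key ⊢
    linear_combination -key
  · left
    rw [spectrum.mem_iff, Algebra.algebraMap_eq_smul_one]
    intro hu
    apply h
    have h𝒪d : IsUnit 𝒪.det := (Matrix.isUnit_iff_isUnit_det 𝒪).mp h𝒪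
    have h2 : IsUnit ((z • (1 : Matrix (Fin s) (Fin s) ℂ) - 𝒪⁻¹) * 𝒪) := hu.mul h𝒪
    rw [Matrix.sub_mul, Matrix.smul_mul, Matrix.one_mul, Matrix.nonsing_inv_mul 𝒪 h𝒪d] at h2
    have h3 := h2.neg
    rwa [neg_sub] at h3
end

section
/- Let s ≥ 1, let 𝒪 be an invertible complex s×s matrix, b ∈ ℂ^s, 𝟙 = (1,…,1)ᵀ ∈ ℂ^s. Assume A-stability: for every z ∈ ℂ with Re z ≤ 0 the matrix I − z𝒪 is invertible and |R(z)| ≤ 1, where R(z) = 1 + z·bᵀ(I − z𝒪)^{-1}𝟙. Let ζ ∈ ℂ with |ζ| ≤ 1 and ζ ≠ 1 be such that T = 𝒪 + (ζ/(1−ζ))·𝟙bᵀ is invertible. Then every z in the spectrum of T^{-1} satisfies Re z ≥ 0 and z ≠ 0. -/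
open Matrix

private lemma rk_diff_det {s : ℕ} {f : ℂ → Matrix (Fin s) (Fin s) ℂ}
    (hf : ∀ i j, Differentiable ℂ fun z => f z i j) :
    Differentiable ℂ fun z => (f z).det := by
  simp only [Matrix.det_apply']
  refine Differentiable.fun_sum fun σ _ => Differentiable.const_mul ?_ _
  exact Differentiable.fun_finsetProd fun i _ => hf (σ i) i

private lemma rk_diff_entries {s : ℕ} (𝒪 : Matrix (Fin s) (Fin s) ℂ) (i j : Fin s) :
    Differentiable ℂ fun z : ℂ => (1 - z • 𝒪) i j := by
  simp only [Matrix.sub_apply, Matrix.smul_apply, smul_eq_mul]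
  exact (differentiable_const _).sub (differentiable_id.mul (differentiable_const _))

private lemma rk_diff_adj {s : ℕ} (𝒪 : Matrix (Fin s) (Fin s) ℂ) (i j : Fin s) :
    Differentiable ℂ fun z : ℂ => (1 - z • 𝒪).adjugate i j := by
  simp only [Matrix.adjugate_apply]
  refine rk_diff_det fun i' k => ?_
  simp only [Matrix.updateRow_apply]
  by_cases h : i' = j <;> simp [h, rk_diff_entries 𝒪 i' k]

private lemma rk_det_one_sub_smul_vecMulVec {s : ℕ} (u b : Fin s → ℂ) (c : ℂ) :
    ((1 : Matrix (Fin s) (Fin s) ℂ) - c • vecMulVec u b).det = 1 - c * (b ⬝ᵥ u) := by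
  have h1 : (1 : Matrix (Fin s) (Fin s) ℂ) - c • vecMulVec u b
      = 1 + vecMulVec ((-c) • u) b := by
    ext i j; simp [vecMulVec_apply, mul_assoc]; ring
  rw [h1, Matrix.vecMulVec_eq (Fin 1), Matrix.det_one_add_replicateCol_mul_replicateRow]
  simp [dotProduct, Finset.mul_sum]
  rw [sub_eq_add_neg]; congr 1; rw [neg_inj]
  exact Finset.sum_congr rfl fun i _ => by ring

private lemma rk_inv_mul_vecMulVec {s : ℕ} (U : Matrix (Fin s) (Fin s) ℂ)
    (u b : Fin s → ℂ) : U⁻¹ * vecMulVec u b = vecMulVec (U⁻¹ *ᵥ u) b := by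
  ext i j
  simp [Matrix.mul_apply, vecMulVec_apply, Matrix.mulVec, dotProduct, Finset.sum_mul, mul_assoc]

/-- For an A-stable Runge–Kutta method with invertible coefficient matrix 𝒪,
the spectrum of the matrix symbol Δ(ζ) = (𝒪 + (ζ/(1−ζ))𝟙bᵀ)⁻¹ is contained in
the closed right half-plane minus the origin, for all |ζ| ≤ 1, ζ ≠ 1
(from the proof of Theorem 5.3 of Kovács–Li–Lubich). -/
theorem runge_kutta_symbol_spectrum_right_halfplane
    (s : ℕ) (hs : 1 ≤ s)
    (𝒪 : Matrix (Fin s) (Fin s) ℂ) (b : Fin s → ℂ) (h𝒪 : IsUnit 𝒪)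
    (hAstable : ∀ z : ℂ, z.re ≤ 0 →
      IsUnit (1 - z • 𝒪) ∧
        ‖1 + z * (b ⬝ᵥ ((1 - z • 𝒪)⁻¹ *ᵥ fun _ => 1))‖ ≤ 1)
    (ζ : ℂ) (hζ1 : ‖ζ‖ ≤ 1) (hζ : ζ ≠ 1)
    (hT : IsUnit (𝒪 + (ζ / (1 - ζ)) • vecMulVec (fun _ => 1) b))
    (z : ℂ)
    (hz : z ∈ spectrum ℂ ((𝒪 + (ζ / (1 - ζ)) • vecMulVec (fun _ => 1) b)⁻¹)) :
    0 ≤ z.re ∧ z ≠ 0 := by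
  set μ : ℂ := ζ / (1 - ζ) with hμ
  set T : Matrix (Fin s) (Fin s) ℂ := 𝒪 + μ • vecMulVec (fun _ => 1) b with hTdef
  have hTdet : IsUnit T.det := (Matrix.isUnit_iff_isUnit_det T).mp hT
  have hTinv_unit : IsUnit T⁻¹ := Matrix.isUnit_nonsing_inv_iff.mpr hT
  constructor
  swap
  · rintro rfl
    rw [spectrum.zero_mem_iff] at hz
    exact hz hTinv_unit
  by_contra hre0
  push_neg at hre0
  have hrele : z.re ≤ 0 := hre0.le
  -- from the spectrum hypothesis: 1 - z • T is not a unit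
  have hsing : ¬ IsUnit ((1 : Matrix (Fin s) (Fin s) ℂ) - z • T) := by
    rw [spectrum.mem_iff] at hz
    intro h
    apply hz
    have key : algebraMap ℂ (Matrix (Fin s) (Fin s) ℂ) z - T⁻¹
        = T⁻¹ * (-(1 - z • T)) := by
      rw [Algebra.algebraMap_eq_smul_one]
      rw [Matrix.mul_neg, Matrix.mul_sub, Matrix.mul_one, Matrix.mul_smul,
        Matrix.nonsing_inv_mul T hTdet, neg_sub]
    rw [key]
    exact hTinv_unit.mul h.neg
  -- factor out 1 - z • 𝒪
  have hU : IsUnit (1 - z • 𝒪) := (hAstable z hrele).1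
  have hUdet : IsUnit (1 - z • 𝒪).det := (Matrix.isUnit_iff_isUnit_det _).mp hU
  set U : Matrix (Fin s) (Fin s) ℂ := 1 - z • 𝒪 with hUdef
  set q : ℂ := b ⬝ᵥ (U⁻¹ *ᵥ fun _ => 1) with hq
  have hfact : (1 : Matrix (Fin s) (Fin s) ℂ) - z • T
      = U * (1 - (z * μ) • (U⁻¹ * vecMulVec (fun _ => 1) b)) := by
    rw [Matrix.mul_sub, Matrix.mul_one, Matrix.mul_smul, ← Matrix.mul_assoc,
      Matrix.mul_nonsing_inv U hUdet, Matrix.one_mul, hTdef, hUdef]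
    rw [smul_add, smul_smul, sub_sub]
  have hVsing : ¬ IsUnit ((1 : Matrix (Fin s) (Fin s) ℂ)
      - (z * μ) • (U⁻¹ * vecMulVec (fun _ => 1) b)) := fun h => hsing (hfact ▸ hU.mul h)
  have hdetV : (1 : ℂ) - (z * μ) * q = 0 := by
    have := hVsing
    rw [rk_inv_mul_vecMulVec] at this
    rw [Matrix.isUnit_iff_isUnit_det, rk_det_one_sub_smul_vecMulVec, isUnit_iff_ne_zero,
      not_not] at this
    exact this
  -- so ζ * R(z) = 1 where R(z) = 1 + z * q
  have hζne : (1 : ℂ) - ζ ≠ 0 := sub_ne_zero.mpr (Ne.symm hζ)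
  have hζR : ζ * (1 + z * q) = 1 := by
    rw [hμ] at hdetV
    field_simp at hdetV
    linear_combination -hdetV
  -- rational representation of the stability function
  set D : ℂ → ℂ := fun x => (1 - x • 𝒪).det with hDdef
  set E : ℂ → ℂ := fun x => b ⬝ᵥ ((1 - x • 𝒪).adjugate *ᵥ fun _ => 1) with hEdef
  set R : ℂ → ℂ := fun x => 1 + x * ((D x)⁻¹ * E x) with hRdef
  have hDdiff : Differentiable ℂ D := rk_diff_det (rk_diff_entries 𝒪)
  have hEdiff : Differentiable ℂ E := by
    simp only [hEdef, dotProduct, Matrix.mulVec, dotProduct]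
    refine Differentiable.fun_sum fun i _ => Differentiable.const_mul ?_ _
    exact Differentiable.fun_sum fun j _ => (rk_diff_adj 𝒪 i j).mul (differentiable_const _)
  have hRform : ∀ x : ℂ, (1 : ℂ) + x * (b ⬝ᵥ ((1 - x • 𝒪)⁻¹ *ᵥ fun _ => 1)) = R x := by
    intro x
    rw [Matrix.inv_def, Ring.inverse_eq_inv, Matrix.smul_mulVec, dotProduct_smul]
    simp [hRdef, hDdef, hEdef, smul_eq_mul, mul_assoc]
  have hRz : R z = 1 + z * q := by
    rw [← hRform z, hq, hUdef]
  have habsζ1 : ‖1 + z * q‖ ≤ 1 := by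
    have := (hAstable z hrele).2
    rwa [hq, hUdef]
  have habsRz : ‖1 + z * q‖ = 1 := by
    have h1 : ‖ζ‖ * ‖1 + z * q‖ = 1 := by
      rw [← norm_mul, hζR]; exact norm_one
    nlinarith [norm_nonneg ζ, norm_nonneg (1 + z * q)]
  have hopen : ∀ᶠ x in nhds z, x.re < 0 :=
    (isOpen_lt Complex.continuous_re continuous_const).eventually_mem hre0
  have hDne : ∀ x : ℂ, x.re ≤ 0 → D x ≠ 0 := fun x hx => by
    have := (Matrix.isUnit_iff_isUnit_det _).mp (hAstable x hx).1
    exact isUnit_iff_ne_zero.mp this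
  have hd : ∀ᶠ x in nhds z, DifferentiableAt ℂ R x := by
    filter_upwards [hopen] with x hx
    exact (differentiableAt_const _).add (differentiableAt_id.mul
      (((hDdiff x).inv (hDne x hx.le)).mul (hEdiff x)))
  have hmax : IsLocalMax (norm ∘ R) z := by
    filter_upwards [hopen] with x hx
    have := (hAstable x hx.le).2
    rw [hRform x] at this
    simp only [Function.comp_apply, hRz]
    rw [habsRz]
    exact this
  have heq := Complex.eventually_eq_of_isLocalMax_norm hd hmax
  set P : ℂ → ℂ := fun x => ζ * (D x + x * E x) - D x with hPdef
  have hPdiff : Differentiable ℂ P :=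
    ((hDdiff.add (differentiable_id.mul hEdiff)).const_mul ζ).sub hDdiff
  have hPanalytic : AnalyticOnNhd ℂ P Set.univ :=
    Complex.analyticOnNhd_univ_iff_differentiable.mpr hPdiff
  have hP0 : P =ᶠ[nhds z] 0 := by
    filter_upwards [heq, hopen] with x hx1 hx2
    have hDx : D x ≠ 0 := hDne x hx2.le
    have h1 : ζ * (1 + x * ((D x)⁻¹ * E x)) = 1 := by
      have : ζ * R x = 1 := by rw [hx1, hRz]; exact hζR
      simpa [hRdef] using this
    have h2 : ζ * (D x + x * E x) = D x := by
      field_simp at h1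
      linear_combination h1
    simp only [hPdef, Pi.zero_apply, h2, sub_self]
  have hall := hPanalytic.eqOn_zero_of_preconnected_of_eventuallyEq_zero
    isPreconnected_univ (Set.mem_univ z) hP0
  have hP0val : P 0 = 0 := hall (Set.mem_univ 0)
  have hD0 : D 0 = 1 := by simp [hDdef]
  rw [hPdef] at hP0val
  simp only [hD0, zero_mul, add_zero, mul_one] at hP0val
  exact hζ (by linear_combination hP0val)
end

section
/- Let X be a vector space over ℝ, s ≥ 1, let 𝒪 = (a_{ij}) be an invertible real s×s matrix, b = (b_i) ∈ ℝ^s, 𝟙 = (1,…,1)ᵀ ∈ ℝ^s, and set w = (bᵀ𝒪^{-1})ᵀ ∈ ℝ^s and R(∞) = 1 − bᵀ𝒪^{-1}𝟙. Let τ ≠ 0 and let u : ℕ → X and U, V : ℕ → (Fin s → X) satisfy u_0 = 0 and, for all n ≥ 0: U_{ni} = u_n + τ ∑_{j=1}^s a_{ij} V_{nj} for 1 ≤ i ≤ s, and u_{n+1} = u_n + τ ∑_{i=1}^s b_i V_{ni}. Then for all n ≥ 0, u_{n+1} = ∑_{k=0}^n R(∞)^{n−k} ∑_{i=1}^s w_i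 U_{ki}. -/
open Matrix

/-- Formula (5.5) of Kovács–Li–Lubich (Lubich–Ostermann, Lemma 3.1): for a
Runge–Kutta method with invertible coefficient matrix 𝒪 started from u₀ = 0,
the step solution is u_{n+1} = bᵀ𝒪⁻¹ ∑_{k=0}^n R(∞)^{n−k} U_k, where
R(∞) = 1 − bᵀ𝒪⁻¹𝟙. -/
theorem runge_kutta_step_from_stages
    {X : Type*} [AddCommGroup X] [Module ℝ X]
    (s : ℕ) (hs : 1 ≤ s)
    (𝒪 : Matrix (Fin s) (Fin s) ℝ) (b : Fin s → ℝ) (h𝒪 : IsUnit 𝒪)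
    (τ : ℝ) (hτ : τ ≠ 0)
    (u : ℕ → X) (U V : ℕ → Fin s → X)
    (hu0 : u 0 = 0)
    (hU : ∀ n i, U n i = u n + τ • ∑ j, 𝒪 i j • V n j)
    (hstep : ∀ n, u (n + 1) = u n + τ • ∑ i, b i • V n i) :
    ∀ n, u (n + 1) = ∑ k ∈ Finset.range (n + 1), ∑ i,
      ((1 - b ⬝ᵥ (𝒪⁻¹ *ᵥ fun _ => 1)) ^ (n - k) * (b ᵥ* 𝒪⁻¹) i) • U k i := by
  set w : Fin s → ℝ := b ᵥ* 𝒪⁻¹ with hw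
  set R : ℝ := 1 - b ⬝ᵥ (𝒪⁻¹ *ᵥ fun _ => 1) with hR
  -- w ᵥ* 𝒪 = b
  have hinv : 𝒪⁻¹ * 𝒪 = 1 := nonsing_inv_mul 𝒪 (isUnit_iff_isUnit_det 𝒪 |>.mp h𝒪)
  have hwO : ∀ j, ∑ i, w i * 𝒪 i j = b j := by
    intro j
    have : (w ᵥ* 𝒪) j = (b ᵥ* (𝒪⁻¹ * 𝒪)) j := by rw [hw, vecMul_vecMul]
    rw [hinv, vecMul_one] at this
    simpa [vecMul, dotProduct] using this
  have hsumw : ∑ i, w i = 1 - R := by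
    rw [hR, dotProduct_mulVec]
    simp [dotProduct]
    rfl
  -- key recurrence: u (n+1) = (∑ i, w i • U n i) + R • u n
  have hkey : ∀ n, u (n + 1) = (∑ i, w i • U n i) + R • u n := by
    intro n
    have hS : ∑ i, w i • U n i = (1 - R) • u n + τ • ∑ j, b j • V n j := by
      calc ∑ i, w i • U n i
          = ∑ i, (w i • u n + w i • (τ • ∑ j, 𝒪 i j • V n j)) := by
            simp [hU, smul_add]
        _ = (∑ i, w i) • u n + ∑ i, w i • (τ • ∑ j, 𝒪 i j • V n j) := by
            rw [Finset.sum_add_distrib, Finset.sum_smul]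
        _ = (1 - R) • u n + τ • ∑ j, (∑ i, w i * 𝒪 i j) • V n j := by
            rw [hsumw]
            congr 1
            simp only [Finset.smul_sum, smul_smul, Finset.sum_smul]
            rw [Finset.sum_comm]
            exact Finset.sum_congr rfl fun j _ => Finset.sum_congr rfl fun i _ => by
              congr 1; ring
        _ = (1 - R) • u n + τ • ∑ j, b j • V n j := by
            simp [hwO]
    rw [hS, hstep n, sub_smul, one_smul]
    abel
  intro n
  induction n with
  | zero => simp [hkey 0, hu0]
  | succ n ih =>
      rw [hkey (n + 1), ih, Finset.smul_sum]
      have h1 : ∀ k, k ∈ Finset.range (n + 1) →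
          R • ∑ i, (R ^ (n - k) * w i) • U k i
            = ∑ i, (R ^ (n + 1 - k) * w i) • U k i := by
        intro k hk
        rw [Finset.smul_sum]
        refine Finset.sum_congr rfl fun i _ => ?_
        rw [smul_smul]
        congr 1
        have hk' := Finset.mem_range.mp hk
        have : n + 1 - k = (n - k) + 1 := by omega
        rw [this, pow_succ]
        ring
      rw [Finset.sum_congr rfl h1, Finset.sum_range_succ (n := n + 1)]
      simp [add_comm]
end

section
/- Let X be a complex Banach space and let 𝒯 be a set of bounded linear operators on X that is R-bounded with R-bound C. Then the absolute convex hull of 𝒯, i.e. the set of all operators of the form ∑_{i=1}^m c_i T_i with m ≥ 1, T_1,…,T_m ∈ 𝒯 and c_1,…,c_m ∈ ℂ satisfying ∑_{i=1}^m |c_i| ≤ 1, is R-bounded with R-bound at most 2C. -/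
/-- A set 𝒯 of bounded operators on a complex Banach space is R-bounded with
R-bound C if the randomized square function estimate holds, with signs
averaged over all choices ε ∈ {−1,1}^l. -/
def RBounded {X : Type*} [NormedAddCommGroup X] [NormedSpace ℂ X]
    (𝒯 : Set (X →L[ℂ] X)) (C : ℝ) : Prop :=
  ∀ l : ℕ, 1 ≤ l → ∀ (T : Fin l → X →L[ℂ] X) (v : Fin l → X),
    (∀ j, T j ∈ 𝒯) →
    (2 : ℝ)⁻¹ ^ l *
        ∑ ε : Fin l → Bool,
          ‖∑ j, (if ε j then (1 : ℝ) else -1) • (T j) (v j)‖ ^ 2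
      ≤ C ^ 2 * ((2 : ℝ)⁻¹ ^ l *
        ∑ ε : Fin l → Bool,
          ‖∑ j, (if ε j then (1 : ℝ) else -1) • v j‖ ^ 2)

open Finset

noncomputable section RBAux

namespace RBAux

variable {X : Type*} [NormedAddCommGroup X] [NormedSpace ℂ X]

/-- sign of a boolean -/
def sg {l : ℕ} (ε : Fin l → Bool) (j : Fin l) : ℝ := if ε j then 1 else -1

/-- The linear map sending a tuple of operators to the PiLp-2 family of
randomized sums. -/
def phi (l : ℕ) (v : Fin l → X) :
    (Fin l → (X →L[ℂ] X)) →ₗ[ℂ] PiLp 2 (fun _ : Fin l → Bool => X) where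
  toFun S := WithLp.toLp 2 (fun ε => ∑ j, sg ε j • S j (v j))
  map_add' S S' := by
    rw [← WithLp.toLp_add]; congr 1
    funext ε
    show ∑ j, sg ε j • (S j + S' j) (v j)
      = (∑ j, sg ε j • S j (v j)) + ∑ j, sg ε j • S' j (v j)
    simp [ContinuousLinearMap.add_apply, smul_add, Finset.sum_add_distrib]
  map_smul' a S := by
    rw [RingHom.id_apply, ← WithLp.toLp_smul]; congr 1
    funext ε
    show ∑ j, sg ε j • (a • S j) (v j) = a • ∑ j, sg ε j • S j (v j)
    simp [ContinuousLinearMap.smul_apply, Finset.smul_sum, smul_comm a]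

def psiv (l : ℕ) (v : Fin l → X) : PiLp 2 (fun _ : Fin l → Bool => X) :=
  WithLp.toLp 2 (fun ε => ∑ j, sg ε j • v j)

lemma norm_phi_sq (l : ℕ) (v : Fin l → X) (S : Fin l → (X →L[ℂ] X)) :
    ‖phi l v S‖ ^ 2 = ∑ ε : Fin l → Bool, ‖∑ j, sg ε j • S j (v j)‖ ^ 2 := by
  rw [PiLp.norm_sq_eq_of_L2]; rfl

lemma norm_psiv_sq (l : ℕ) (v : Fin l → X) :
    ‖psiv l v‖ ^ 2 = ∑ ε : Fin l → Bool, ‖∑ j, sg ε j • v j‖ ^ 2 := by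
  rw [PiLp.norm_sq_eq_of_L2]; rfl

lemma sqrt_step {a b : ℝ} (hb : 0 ≤ b) (h : a ^ 2 ≤ b ^ 2) : a ≤ b := by
  by_contra hab
  push_neg at hab
  nlinarith

/-- R-boundedness, reformulated. -/
lemma baseA {𝒯 : Set (X →L[ℂ] X)} {C : ℝ} (hC : 0 ≤ C)
    (h𝒯 : ∀ l : ℕ, 1 ≤ l → ∀ (T : Fin l → X →L[ℂ] X) (v : Fin l → X),
      (∀ j, T j ∈ 𝒯) →
      (2 : ℝ)⁻¹ ^ l * ∑ ε : Fin l → Bool,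
            ‖∑ j, (if ε j then (1 : ℝ) else -1) • (T j) (v j)‖ ^ 2
        ≤ C ^ 2 * ((2 : ℝ)⁻¹ ^ l * ∑ ε : Fin l → Bool,
            ‖∑ j, (if ε j then (1 : ℝ) else -1) • v j‖ ^ 2))
    {l : ℕ} (hl : 1 ≤ l) (v : Fin l → X) (U : Fin l → X →L[ℂ] X)
    (hU : ∀ j, U j ∈ 𝒯) :
    ‖phi l v U‖ ≤ C * ‖psiv l v‖ := by
  have h := h𝒯 l hl U v hU
  have hP : (0 : ℝ) < (2 : ℝ)⁻¹ ^ l := by positivity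
  have hA : ‖phi l v U‖ ^ 2
      = ∑ ε : Fin l → Bool, ‖∑ j, (if ε j then (1 : ℝ) else -1) • (U j) (v j)‖ ^ 2 := by
    rw [norm_phi_sq]; rfl
  have hB : ‖psiv l v‖ ^ 2
      = ∑ ε : Fin l → Bool, ‖∑ j, (if ε j then (1 : ℝ) else -1) • v j‖ ^ 2 := by
    rw [norm_psiv_sq]; rfl
  rw [← hA, ← hB] at h
  have h2 : ‖phi l v U‖ ^ 2 ≤ (C * ‖psiv l v‖) ^ 2 := by
    rw [show C ^ 2 * ((2:ℝ)⁻¹ ^ l * ‖psiv l v‖ ^ 2)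
        = (2:ℝ)⁻¹ ^ l * ((C * ‖psiv l v‖) ^ 2) by ring] at h
    exact le_of_mul_le_mul_left h hP
  exact sqrt_step (by positivity) h2

/-- Symmetry at sign vectors. -/
lemma contra_base (l : ℕ) (v : Fin l → X) (U : Fin l → X →L[ℂ] X)
    (r : Fin l → ℝ) (hr : ∀ j, r j = 1 ∨ r j = -1) :
    ‖phi l v (fun j => (r j : ℂ) • U j)‖ = ‖phi l v U‖ := by
  have hsq : ‖phi l v (fun j => (r j : ℂ) • U j)‖ ^ 2 = ‖phi l v U‖ ^ 2 := by
    rw [norm_phi_sq, norm_phi_sq]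
    set m : (Fin l → Bool) → (Fin l → Bool) :=
      fun ε j => if r j = 1 then ε j else !ε j with hm
    have hinv : Function.Involutive m := by
      intro ε; funext j; by_cases h : r j = 1 <;> simp [hm, h]
    have hpt : ∀ ε : Fin l → Bool,
        (∑ j, sg ε j • (((r j : ℂ) • U j) (v j))) = ∑ j, sg (m ε) j • U j (v j) := by
      intro ε
      refine Finset.sum_congr rfl fun j _ => ?_
      rcases hr j with h | h
      · simp [hm, sg, h]
      · have h1 : r j ≠ 1 := by rw [h]; norm_num
        cases hε : ε j <;> simp [hm, sg, h, h1, hε] <;> norm_num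
    calc (∑ ε : Fin l → Bool, ‖∑ j, sg ε j • (((r j : ℂ) • U j) (v j))‖ ^ 2)
        = ∑ ε : Fin l → Bool, ‖∑ j, sg (m ε) j • U j (v j)‖ ^ 2 :=
          Finset.sum_congr rfl fun ε _ => by rw [hpt ε]
      _ = ∑ ε : Fin l → Bool, ‖∑ j, sg ε j • U j (v j)‖ ^ 2 :=
          Fintype.sum_equiv (Function.Involutive.toPerm m hinv) _ _ (fun ε => rfl)
  have := congrArg Real.sqrt hsq
  rwa [Real.sqrt_sq (norm_nonneg _), Real.sqrt_sq (norm_nonneg _)] at this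

/-- Contraction principle. -/
lemma contra (l : ℕ) (v : Fin l → X) (U : Fin l → X →L[ℂ] X)
    (r : Fin l → ℝ) (h1 : ∀ j, |r j| ≤ 1) :
    ‖phi l v (fun j => (r j : ℂ) • U j)‖ ≤ ‖phi l v U‖ := by
  suffices H : ∀ (s : Finset (Fin l)) (r : Fin l → ℝ), (∀ j, |r j| ≤ 1) →
      (∀ j ∉ s, r j = 1 ∨ r j = -1) →
      ‖phi l v (fun j => (r j : ℂ) • U j)‖ ≤ ‖phi l v U‖ by
    exact H Finset.univ r h1 (fun j hj => absurd (Finset.mem_univ j) hj)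
  intro s
  induction s using Finset.induction_on with
  | empty =>
    intro r h1 h2
    exact (contra_base l v U r fun j => h2 j (by simp)).le
  | @insert j s hj ih =>
    intro r h1 h2
    set lam : ℝ := (1 + r j) / 2 with hlam
    have habs := abs_le.mp (h1 j)
    have hl0 : 0 ≤ lam := by rw [hlam]; linarith [habs.1]
    have hl1 : lam ≤ 1 := by rw [hlam]; linarith [habs.2]
    have hrl : (2 : ℝ) * lam - 1 = r j := by rw [hlam]; ring
    have key : (fun k => ((r k : ℂ)) • U k)
        = (lam : ℂ) • (fun k => ((Function.update r j 1 k : ℝ) : ℂ) • U k)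
          + ((1 - lam : ℝ) : ℂ) • (fun k => ((Function.update r j (-1) k : ℝ) : ℂ) • U k) := by
      funext k
      show (r k : ℂ) • U k = (lam : ℂ) • ((Function.update r j 1 k : ℝ) : ℂ) • U k
        + ((1 - lam : ℝ) : ℂ) • ((Function.update r j (-1) k : ℝ) : ℂ) • U k
      by_cases hk : k = j
      · subst hk
        rw [Function.update_self, Function.update_self, smul_smul, smul_smul, ← add_smul]
        congr 1
        rw [← hrl]; push_cast; ring
      · rw [Function.update_of_ne hk, Function.update_of_ne hk, smul_smul, smul_smul,
          ← add_smul]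
        congr 1
        push_cast
        ring
    rw [key, map_add, map_smul, map_smul]
    have e1 : ‖phi l v (fun k => ((Function.update r j 1 k : ℝ) : ℂ) • U k)‖ ≤ ‖phi l v U‖ := by
      apply ih
      · intro k
        by_cases hk : k = j
        · subst hk; simp
        · rw [Function.update_of_ne hk]; exact h1 k
      · intro k hk
        by_cases hkj : k = j
        · subst hkj; simp
        · rw [Function.update_of_ne hkj]
          exact h2 k (by simp [hkj, hk])
    have e2 : ‖phi l v (fun k => ((Function.update r j (-1) k : ℝ) : ℂ) • U k)‖ ≤ ‖phi l v U‖ := by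
      apply ih
      · intro k
        by_cases hk : k = j
        · subst hk; simp
        · rw [Function.update_of_ne hk]; exact h1 k
      · intro k hk
        by_cases hkj : k = j
        · subst hkj; simp
        · rw [Function.update_of_ne hkj]
          exact h2 k (by simp [hkj, hk])
    have hl2 : (0:ℝ) ≤ 1 - lam := by linarith
    have n1 : ‖((lam : ℝ) : ℂ)‖ = lam := by
      rw [Complex.norm_real, Real.norm_eq_abs, abs_of_nonneg hl0]
    have n2 : ‖((1 - lam : ℝ) : ℂ)‖ = 1 - lam := by
      rw [Complex.norm_real, Real.norm_eq_abs, abs_of_nonneg hl2]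
    calc ‖(lam : ℂ) • phi l v _ + ((1 - lam : ℝ) : ℂ) • phi l v _‖
        ≤ ‖((lam : ℝ) : ℂ)‖ * ‖phi l v (fun k => ((Function.update r j 1 k : ℝ) : ℂ) • U k)‖
          + ‖((1 - lam : ℝ) : ℂ)‖ * ‖phi l v (fun k => ((Function.update r j (-1) k : ℝ) : ℂ) • U k)‖ := by
          refine (norm_add_le _ _).trans ?_
          rw [norm_smul, norm_smul]
      _ ≤ lam * ‖phi l v U‖ + (1 - lam) * ‖phi l v U‖ := by
          rw [n1, n2]
          gcongr
      _ = ‖phi l v U‖ := by ring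


variable {𝒯 : Set (X →L[ℂ] X)} {C : ℝ}

lemma elem_bound (hC : 0 ≤ C)
    (h𝒯 : ∀ l : ℕ, 1 ≤ l → ∀ (T : Fin l → X →L[ℂ] X) (v : Fin l → X),
      (∀ j, T j ∈ 𝒯) →
      (2 : ℝ)⁻¹ ^ l * ∑ ε : Fin l → Bool,
            ‖∑ j, (if ε j then (1 : ℝ) else -1) • (T j) (v j)‖ ^ 2
        ≤ C ^ 2 * ((2 : ℝ)⁻¹ ^ l * ∑ ε : Fin l → Bool,
            ‖∑ j, (if ε j then (1 : ℝ) else -1) • v j‖ ^ 2))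
    {l : ℕ} (hl : 1 ≤ l) (v : Fin l → X)
    (a : Fin l → ℂ) (U : Fin l → X →L[ℂ] X)
    (ha : ∀ j, ‖a j‖ ≤ 1) (hU : ∀ j, U j ∈ 𝒯) :
    ‖phi l v (fun j => a j • U j)‖ ≤ 2 * C * ‖psiv l v‖ := by
  have split : (fun j => a j • U j)
      = (fun j => (((a j).re : ℝ) : ℂ) • U j)
        + Complex.I • (fun j => (((a j).im : ℝ) : ℂ) • U j) := by
    funext j
    show a j • U j = (((a j).re : ℝ) : ℂ) • U j
      + Complex.I • ((((a j).im : ℝ) : ℂ) • U j)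
    rw [smul_smul, ← add_smul]
    congr 1
    rw [mul_comm Complex.I]
    exact (Complex.re_add_im (a j)).symm
  have hre : ‖phi l v (fun j => (((a j).re : ℝ) : ℂ) • U j)‖ ≤ ‖phi l v U‖ :=
    contra l v U _ fun j => (Complex.abs_re_le_norm (a j)).trans (ha j)
  have him : ‖phi l v (fun j => (((a j).im : ℝ) : ℂ) • U j)‖ ≤ ‖phi l v U‖ :=
    contra l v U _ fun j => (Complex.abs_im_le_norm (a j)).trans (ha j)
  have hA := baseA hC h𝒯 hl v U hU
  calc ‖phi l v (fun j => a j • U j)‖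
      = ‖phi l v (fun j => (((a j).re : ℝ) : ℂ) • U j)
          + Complex.I • phi l v (fun j => (((a j).im : ℝ) : ℂ) • U j)‖ := by
        rw [split, map_add, map_smul]
    _ ≤ ‖phi l v (fun j => (((a j).re : ℝ) : ℂ) • U j)‖
          + ‖Complex.I‖ * ‖phi l v (fun j => (((a j).im : ℝ) : ℂ) • U j)‖ := by
        refine (norm_add_le _ _).trans ?_
        rw [norm_smul]
    _ ≤ 2 * C * ‖psiv l v‖ := by
        rw [Complex.norm_I]
        linarith [hre, him, hA]

lemma hull_bound (hC : 0 ≤ C)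
    (h𝒯 : ∀ l : ℕ, 1 ≤ l → ∀ (T : Fin l → X →L[ℂ] X) (v : Fin l → X),
      (∀ j, T j ∈ 𝒯) →
      (2 : ℝ)⁻¹ ^ l * ∑ ε : Fin l → Bool,
            ‖∑ j, (if ε j then (1 : ℝ) else -1) • (T j) (v j)‖ ^ 2
        ≤ C ^ 2 * ((2 : ℝ)⁻¹ ^ l * ∑ ε : Fin l → Bool,
            ‖∑ j, (if ε j then (1 : ℝ) else -1) • v j‖ ^ 2))
    {l : ℕ} (hl : 1 ≤ l) (v : Fin l → X) (s : Finset (Fin l)) :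
    ∀ S : Fin l → (X →L[ℂ] X),
      (∀ j ∈ s, ∃ m : ℕ, 1 ≤ m ∧ ∃ (c : Fin m → ℂ) (Tl : Fin m → X →L[ℂ] X),
          (∀ i, Tl i ∈ 𝒯) ∧ (∑ i, ‖c i‖) ≤ 1 ∧ S j = ∑ i, c i • Tl i) →
      (∀ j ∉ s, ∃ (b : ℂ) (W : X →L[ℂ] X), W ∈ 𝒯 ∧ ‖b‖ ≤ 1 ∧ S j = b • W) →
      ‖phi l v S‖ ≤ 2 * C * ‖psiv l v‖ := by
  induction s using Finset.induction_on with
  | empty =>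
    intro S _ h2
    choose b W hW hb hSW using fun j => h2 j (by simp)
    have hS : S = fun j => b j • W j := funext fun j => hSW j
    rw [hS]
    exact elem_bound hC h𝒯 hl v b W hb hW
  | @insert j s hj ih =>
    intro S H1 H2
    obtain ⟨m, hm, c, Tl, hTl, hsum, hSj⟩ := H1 j (Finset.mem_insert_self j s)
    have hm0 : 0 < m := hm
    set w : Fin m → ℝ := fun i => ‖c i‖ with hw
    set θ : Fin m → ℂ := fun i => if c i = 0 then 0 else c i / ((w i : ℝ) : ℂ) with hθ
    have hw0 : ∀ i, 0 ≤ w i := fun i => norm_nonneg _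
    have hwθ : ∀ i, ((w i : ℝ) : ℂ) * θ i = c i := by
      intro i
      by_cases h : c i = 0
      · simp [hθ, hw, h]
      · have hne : ((w i : ℝ) : ℂ) ≠ 0 := by
          simp only [hw, Complex.ofReal_ne_zero]
          exact norm_ne_zero_iff.mpr h
        rw [hθ]
        simp only [h, if_false]
        field_simp
    have hθ1 : ∀ i, ‖θ i‖ ≤ 1 := by
      intro i
      by_cases h : c i = 0
      · simp [hθ, h]
      · rw [hθ]
        simp only [h, if_false]
        rw [norm_div, Complex.norm_real, Real.norm_eq_abs, hw]
        rw [abs_of_nonneg (norm_nonneg _), div_self (norm_ne_zero_iff.mpr h)]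
    set σ : ℝ := ∑ i, w i with hσ
    have hσ0 : 0 ≤ σ := Finset.sum_nonneg fun i _ => hw0 i
    have hσ1 : σ ≤ 1 := by rw [hσ, hw]; exact hsum
    have key : S = (∑ i, ((w i : ℝ) : ℂ) • Function.update S j (θ i • Tl i))
        + ((1 - σ : ℝ) : ℂ) • Function.update S j 0 := by
      funext k
      have happ : ((∑ i, ((w i : ℝ) : ℂ) • Function.update S j (θ i • Tl i))
          + ((1 - σ : ℝ) : ℂ) • Function.update S j 0) k
          = (∑ i, ((w i : ℝ) : ℂ) • Function.update S j (θ i • Tl i) k)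
            + ((1 - σ : ℝ) : ℂ) • Function.update S j 0 k := by
        simp [Finset.sum_apply]
      rw [happ]
      by_cases hk : k = j
      · subst hk
        simp only [Function.update_self]
        rw [hSj]
        simp only [smul_smul, hwθ, smul_zero, add_zero]
      · simp only [Function.update_of_ne hk]
        have : (∑ i, ((w i : ℝ) : ℂ) • S k) = ((σ : ℝ) : ℂ) • S k := by
          rw [← Finset.sum_smul]
          congr 1
          rw [hσ]
          push_cast
          rfl
        rw [this, ← add_smul]
        have hcoef : (((σ : ℝ) : ℂ)) + ((1 - σ : ℝ) : ℂ) = 1 := by push_cast; ring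
        rw [hcoef, one_smul]
    have hupd : ∀ i : Fin m,
        ‖phi l v (Function.update S j (θ i • Tl i))‖ ≤ 2 * C * ‖psiv l v‖ := by
      intro i
      apply ih
      · intro k hk
        have hkj : k ≠ j := fun h => hj (h ▸ hk)
        rw [Function.update_of_ne hkj]
        exact H1 k (Finset.mem_insert_of_mem hk)
      · intro k hk
        by_cases hkj : k = j
        · subst hkj
          exact ⟨θ i, Tl i, hTl i, hθ1 i, by rw [Function.update_self]⟩
        · rw [Function.update_of_ne hkj]
          exact H2 k (by simp [hkj, hk])
    have hupd0 : ‖phi l v (Function.update S j 0)‖ ≤ 2 * C * ‖psiv l v‖ := by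
      apply ih
      · intro k hk
        have hkj : k ≠ j := fun h => hj (h ▸ hk)
        rw [Function.update_of_ne hkj]
        exact H1 k (Finset.mem_insert_of_mem hk)
      · intro k hk
        by_cases hkj : k = j
        · subst hkj
          exact ⟨0, Tl ⟨0, hm0⟩, hTl _, by simp, by rw [Function.update_self, zero_smul]⟩
        · rw [Function.update_of_ne hkj]
          exact H2 k (by simp [hkj, hk])
    have hM0 : (0:ℝ) ≤ 2 * C * ‖psiv l v‖ := by positivity
    have expand : phi l v S
        = (∑ i, ((w i : ℝ) : ℂ) • phi l v (Function.update S j (θ i • Tl i)))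
          + ((1 - σ : ℝ) : ℂ) • phi l v (Function.update S j 0) := by
      conv_lhs => rw [key]
      rw [map_add, map_sum, map_smul]
      congr 1
      exact Finset.sum_congr rfl fun i _ => (map_smul _ _ _)
    calc ‖phi l v S‖
        = ‖(∑ i, ((w i : ℝ) : ℂ) • phi l v (Function.update S j (θ i • Tl i)))
            + ((1 - σ : ℝ) : ℂ) • phi l v (Function.update S j 0)‖ := by
          rw [expand]
      _ ≤ (∑ i, ‖((w i : ℝ) : ℂ) • phi l v (Function.update S j (θ i • Tl i))‖)
            + ‖((1 - σ : ℝ) : ℂ) • phi l v (Function.update S j 0)‖ := by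
          refine (norm_add_le _ _).trans ?_
          gcongr
          exact norm_sum_le _ _
      _ ≤ (∑ i, w i * (2 * C * ‖psiv l v‖)) + (1 - σ) * (2 * C * ‖psiv l v‖) := by
          gcongr with i hi
          · rw [norm_smul, Complex.norm_real, Real.norm_eq_abs, abs_of_nonneg (hw0 i)]
            exact mul_le_mul_of_nonneg_left (hupd i) (hw0 i)
          · rw [norm_smul, Complex.norm_real, Real.norm_eq_abs,
              abs_of_nonneg (by linarith : (0:ℝ) ≤ 1 - σ)]
            exact mul_le_mul_of_nonneg_left hupd0 (by linarith)
      _ = (σ + (1 - σ)) * (2 * C * ‖psiv l v‖) := by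
          rw [← Finset.sum_mul, ← hσ]
          ring
      _ = 2 * C * ‖psiv l v‖ := by ring


end RBAux

end RBAux


/-- The absolute convex hull of an R-bounded set of operators is R-bounded,
with R-bound at most doubled (Lemma 2.1 of Kovács–Li–Lubich, quoted from
Clément–de Pagter–Sukochev–Witvliet). -/
theorem rBounded_absConvexHull
    {X : Type*} [NormedAddCommGroup X] [NormedSpace ℂ X]
    (𝒯 : Set (X →L[ℂ] X)) (C : ℝ) (hC : 0 ≤ C)
    (h𝒯 : RBounded 𝒯 C) :
    RBounded
      {S | ∃ (m : ℕ), 1 ≤ m ∧ ∃ (c : Fin m → ℂ) (T : Fin m → X →L[ℂ] X),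
        (∀ i, T i ∈ 𝒯) ∧ (∑ i, ‖c i‖) ≤ 1 ∧ S = ∑ i, c i • T i}
      (2 * C) := by
  intro l hl S v hS
  have main : ‖RBAux.phi l v S‖ ≤ 2 * C * ‖RBAux.psiv l v‖ := by
    refine RBAux.hull_bound hC h𝒯 hl v Finset.univ S (fun j _ => ?_)
      (fun j hj => absurd (Finset.mem_univ j) hj)
    exact hS j
  have hA : ‖RBAux.phi l v S‖ ^ 2
      = ∑ ε : Fin l → Bool, ‖∑ j, (if ε j then (1 : ℝ) else -1) • (S j) (v j)‖ ^ 2 := by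
    rw [RBAux.norm_phi_sq]; rfl
  have hB : ‖RBAux.psiv l v‖ ^ 2
      = ∑ ε : Fin l → Bool, ‖∑ j, (if ε j then (1 : ℝ) else -1) • v j‖ ^ 2 := by
    rw [RBAux.norm_psiv_sq]; rfl
  rw [← hA, ← hB]
  have hsq : ‖RBAux.phi l v S‖ ^ 2 ≤ (2 * C) ^ 2 * ‖RBAux.psiv l v‖ ^ 2 := by
    rw [← mul_pow]
    exact pow_le_pow_left₀ (norm_nonneg _) main 2
  have hP : (0:ℝ) ≤ (2:ℝ)⁻¹ ^ l := by positivity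
  calc (2:ℝ)⁻¹ ^ l * ‖RBAux.phi l v S‖ ^ 2
      ≤ (2:ℝ)⁻¹ ^ l * ((2 * C) ^ 2 * ‖RBAux.psiv l v‖ ^ 2) :=
        mul_le_mul_of_nonneg_left hsq hP
    _ = (2 * C) ^ 2 * ((2:ℝ)⁻¹ ^ l * ‖RBAux.psiv l v‖ ^ 2) := by ring
end
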